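/- arXiv:2406.08327 — 7 statements merged into one kernel-verified Lean document; each statement's English description precedes it below -/
import Mathlib

section
/- Let d ≥ 1, m > 0 real, and μ ∈ ℂ with Re μ > d. Then the function p ↦ (‖p‖² + m²)^{-μ/2} is integrable on ℝ^d and ∫_{ℝ^d} (‖p‖² + m²)^{-μ/2} dp = π^{d/2} m^{d-μ} Γ((μ-d)/2) / Γ(μ/2). -/
open MeasureTheory Complex
open scoped Real
open Set

lemma beta_Ioi {a b : ℂ} (ha : 0 < a.re) (hb : 0 < b.re) :
    ∫ v in Ioi (0:ℝ), (v:ℂ) ^ (a-1) * ((1:ℂ)+(v:ℂ)) ^ (-(a+b))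
      = Complex.Gamma a * Complex.Gamma b / Complex.Gamma (a+b) := by
  have himg : (fun x : ℝ => x / (1 - x)) '' Ioo 0 1 = Ioi (0:ℝ) := by
    ext v
    constructor
    · rintro ⟨x, ⟨hx0, hx1⟩, rfl⟩
      exact div_pos hx0 (by linarith)
    · intro hv
      refine ⟨v / (1 + v), ⟨div_pos hv (by linarith [hv.out]), ?_⟩, ?_⟩
      · rw [div_lt_one (by linarith [hv.out])]; linarith [hv.out]
      · have h1 : (0:ℝ) < 1 + v := by linarith [hv.out]
        field_simp
        ring
  have hderiv : ∀ x ∈ Ioo (0:ℝ) 1, HasDerivWithinAt (fun x : ℝ => x / (1 - x))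
      ((1 - x)⁻¹ ^ 2) (Ioo 0 1) x := by
    intro x hx
    have h1 : 1 - x ≠ 0 := by have := hx.2; intro h; linarith [show x = 1 by linarith]
    have := (hasDerivAt_id x).div ((hasDerivAt_id x).const_sub 1) h1
    convert this.hasDerivWithinAt using 1
    case e'_8 => rfl
    case e'_9 =>
      simp only [id]
      field_simp
      ring
    all_goals rfl
  have hinj : InjOn (fun x : ℝ => x / (1 - x)) (Ioo 0 1) := by
    intro x hx y hy h
    have hx1 : 1 - x ≠ 0 := by have := hx.2; intro h; linarith [show x = 1 by linarith]
    have hy1 : 1 - y ≠ 0 := by have := hy.2; intro h; linarith [show y = 1 by linarith]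
    field_simp at h
    linarith
  rw [← himg, integral_image_eq_integral_abs_deriv_smul measurableSet_Ioo hderiv hinj]
  have hGne : Complex.Gamma (a+b) ≠ 0 :=
    Complex.Gamma_ne_zero_of_re_pos (by simp [Complex.add_re]; linarith)
  have hbeta := Complex.Gamma_mul_Gamma_eq_betaIntegral ha hb
  have key : ∫ x in Ioo (0:ℝ) 1, |(1-x)⁻¹ ^ 2| •
      (((x / (1-x) : ℝ) : ℂ) ^ (a-1) * ((1:ℂ) + ((x / (1-x) : ℝ) : ℂ)) ^ (-(a+b)))
      = Complex.betaIntegral a b := by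
    rw [Complex.betaIntegral, intervalIntegral.integral_of_le zero_le_one,
      MeasureTheory.integral_Ioc_eq_integral_Ioo]
    refine setIntegral_congr_fun measurableSet_Ioo fun x hx => ?_
    have hx0 : (0:ℝ) < x := hx.1
    have hx1 : (0:ℝ) < 1 - x := by linarith [hx.2]
    have hY : ((1-x : ℝ) : ℂ) ≠ 0 := by
      simp only [ne_eq, Complex.ofReal_eq_zero]; positivity
    have harg : ((1-x : ℝ) : ℂ).arg ≠ Real.pi := by
      rw [Complex.arg_ofReal_of_nonneg hx1.le]; exact Real.pi_ne_zero.symm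
    have e2 : (1:ℝ) + x / (1-x) = (1-x)⁻¹ := by field_simp; ring
    have e3 : (x / (1-x) : ℝ) = x * (1-x)⁻¹ := div_eq_mul_inv x _
    rw [show |(1-x)⁻¹ ^ 2| = (1-x)⁻¹ ^ 2 from abs_of_nonneg (by positivity), show ((1:ℂ) + ((x / (1-x) : ℝ) : ℂ))
        = (((1:ℝ) + x / (1-x) : ℝ) : ℂ) by push_cast; ring, e2, e3, Complex.ofReal_mul,
      Complex.mul_cpow_ofReal_nonneg hx0.le (inv_nonneg.mpr hx1.le),
      Complex.ofReal_inv, Complex.inv_cpow _ _ harg, Complex.inv_cpow _ _ harg,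
      ← Complex.cpow_neg, ← Complex.cpow_neg]
    rw [real_smul]
    rw [show (((1-x)⁻¹ ^ 2 : ℝ) : ℂ) = ((1-x:ℝ):ℂ) ^ ((-2 : ℤ) : ℂ) by
      rw [Complex.cpow_intCast]; push_cast; rw [zpow_neg]; norm_num [zpow_ofNat]]
    rw [show (1 : ℂ) - (x:ℂ) = ((1-x : ℝ):ℂ) by push_cast; ring]
    have hX : ((x:ℝ):ℂ) ≠ 0 := by
      simp only [ne_eq, Complex.ofReal_eq_zero]; positivity
    simp only [Complex.cpow_def_of_ne_zero hY, Complex.cpow_def_of_ne_zero hX,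
      ← Complex.exp_add]
    congr 1
    push_cast
    ring
  rw [key, hbeta]
  field_simp

lemma m_sq_cpow {m : ℝ} (hm : 0 < m) (w : ℂ) :
    ((m^2 : ℝ) : ℂ) ^ w = (m:ℂ) ^ (2 * w) := by
  have h1 : ((m^2:ℝ):ℂ) ≠ 0 := by
    simp only [ne_eq, Complex.ofReal_eq_zero]; positivity
  have h2 : (m:ℂ) ≠ 0 := by
    simp only [ne_eq, Complex.ofReal_eq_zero]; exact hm.ne'
  rw [Complex.cpow_def_of_ne_zero h1, Complex.cpow_def_of_ne_zero h2,
    ← Complex.ofReal_log (by positivity : (0:ℝ) ≤ m^2),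
    ← Complex.ofReal_log hm.le, Real.log_pow]
  push_cast
  ring_nf

lemma oneDim (d : ℕ) (hd : 1 ≤ d) {m : ℝ} (hm : 0 < m) {μ : ℂ} (hμ : (d:ℝ) < μ.re) :
    ∫ r in Ioi (0:ℝ), r ^ (d - 1) • ((r:ℂ) ^ 2 + (m:ℂ) ^ 2) ^ (-(μ/2))
      = (m:ℂ) ^ ((d:ℂ) - μ) / 2 *
        (Complex.Gamma ((d:ℂ)/2) * Complex.Gamma ((μ - d)/2) / Complex.Gamma (μ/2)) := by
  have hm2 : (0:ℝ) < m ^ 2 := by positivity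
  set g : ℝ → ℂ :=
    fun y => (y ^ ((d:ℝ)/2 - 1) : ℝ) • (((y : ℝ) : ℂ) + (m:ℂ)^2) ^ (-(μ/2)) with hg
  -- step 1 : substitution y = x²
  have h1 : ∫ y in Ioi (0:ℝ), g y
      = (2:ℝ) • ∫ r in Ioi (0:ℝ), r ^ (d-1) • ((r:ℂ)^2 + (m:ℂ)^2) ^ (-(μ/2)) := by
    rw [← MeasureTheory.integral_comp_rpow_Ioi g (p := 2) two_ne_zero, ← integral_smul]
    refine setIntegral_congr_fun measurableSet_Ioi fun x hx => ?_
    have hx0 : (0:ℝ) < x := hx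
    rw [hg]
    simp only
    have ex2 : x ^ (2:ℝ) = x ^ 2 := by
      rw [show (2:ℝ) = ((2:ℕ):ℝ) by norm_num, Real.rpow_natCast]
    rw [smul_smul, smul_smul, ← Real.rpow_mul hx0.le,
      abs_of_pos (by norm_num : (0:ℝ) < 2), mul_assoc, ← Real.rpow_add hx0,
      show ((2:ℝ)-1) + (2:ℝ) * ((d:ℝ)/2 - 1) = (d:ℝ) - 1 by ring]
    congr 1
    · rw [← Real.rpow_natCast x (d-1)]
      congr 1
      rw [Nat.cast_sub hd]
      norm_num
    · rw [ex2]
      push_cast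
      ring_nf
  -- step 2 : scaling y = m² x
  have h2 : ∫ y in Ioi (0:ℝ), g y = (m^2 : ℝ) • ∫ x in Ioi (0:ℝ), g (m^2 * x) := by
    rw [MeasureTheory.integral_comp_mul_left_Ioi g 0 hm2, mul_zero, smul_smul,
      mul_inv_cancel₀ hm2.ne', one_smul]
  -- step 3 : reduce to beta integral
  have h3 : ∫ x in Ioi (0:ℝ), g (m^2 * x)
      = ((m^2 : ℝ) ^ ((d:ℝ)/2 - 1) : ℝ) • (((m^2:ℝ):ℂ) ^ (-(μ/2)) *
        ∫ x in Ioi (0:ℝ), (x:ℂ) ^ ((d:ℂ)/2 - 1) * ((1:ℂ) + (x:ℂ)) ^ (-((d:ℂ)/2 + (μ - d)/2))) := by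
    rw [← integral_const_mul, ← integral_smul]
    refine setIntegral_congr_fun measurableSet_Ioi fun x hx => ?_
    have hx0 : (0:ℝ) < x := hx
    rw [hg]
    simp only
    rw [Real.mul_rpow hm2.le hx0.le,
      show ((m^2 * x : ℝ) : ℂ) + (m:ℂ)^2 = ((m^2 : ℝ):ℂ) * ((1 + x : ℝ):ℂ) by push_cast; ring,
      Complex.mul_cpow_ofReal_nonneg hm2.le (by positivity),
      show (-((d:ℂ)/2 + (μ - d)/2)) = -(μ/2) by ring, mul_smul]
    congr 1
    rw [Complex.real_smul, Complex.ofReal_cpow hx0.le,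
      show (((d:ℝ)/2 - 1 : ℝ) : ℂ) = (d:ℂ)/2 - 1 by push_cast; ring]
    push_cast
    ring
  -- beta evaluation
  have hbeta := beta_Ioi (a := (d:ℂ)/2) (b := (μ - d)/2)
    (by simp only [Complex.div_ofNat_re, Complex.natCast_re]
        positivity)
    (by simp only [Complex.div_ofNat_re, Complex.sub_re, Complex.natCast_re]
        linarith)
  have hmne : (m:ℂ) ≠ 0 := by
    simp only [ne_eq, Complex.ofReal_eq_zero]; exact hm.ne'
  have h5 : (∫ r in Ioi (0:ℝ), r ^ (d-1) • ((r:ℂ)^2 + (m:ℂ)^2) ^ (-(μ/2)))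
      = ((2:ℝ)⁻¹) • ∫ y in Ioi (0:ℝ), g y := by
    rw [h1, smul_smul]; norm_num
  have hm2pow : (m^2) * (m^2) ^ ((d:ℝ)/2 - 1) = (m^2) ^ ((d:ℝ)/2) := by
    nth_rewrite 1 [← Real.rpow_one (m^2)]
    rw [← Real.rpow_add hm2]
    norm_num
  rw [h5, h2, h3, hbeta, smul_smul, smul_smul, mul_assoc ((2:ℝ)⁻¹), hm2pow]
  simp only [Complex.real_smul, Complex.ofReal_mul]
  rw [Complex.ofReal_cpow hm2.le, m_sq_cpow hm, m_sq_cpow hm,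
    show (2:ℂ) * (((d:ℝ)/2 : ℝ) : ℂ) = (d:ℂ) by push_cast; ring,
    show (2:ℂ) * (-(μ/2)) = -μ by ring,
    show (d:ℂ)/2 + (μ - d)/2 = μ/2 by ring]
  have hmm : (m:ℂ)^((d:ℂ) - μ) = (m:ℂ)^(d:ℂ) * (m:ℂ)^(-μ) := by
    rw [← Complex.cpow_add _ _ hmne]
    ring_nf
  rw [hmm]
  push_cast
  ring

/-- For `d ≥ 1`, `m > 0` real, `Re μ > d`, the function
`p ↦ (‖p‖² + m²)^{-μ/2}` is integrable on `ℝ^d` and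
`∫ (‖p‖²+m²)^{-μ/2} dp = π^{d/2} m^{d-μ} Γ((μ-d)/2)/Γ(μ/2)`. -/
theorem stmt_2 (d : ℕ) (hd : 1 ≤ d) (m : ℝ) (hm : 0 < m) (μ : ℂ) (hμ : (d : ℝ) < μ.re) :
    Integrable (fun p : EuclideanSpace ℝ (Fin d) =>
        ((‖p‖ : ℂ) ^ 2 + (m : ℂ) ^ 2) ^ (-(μ / 2))) ∧
    (∫ p : EuclideanSpace ℝ (Fin d), ((‖p‖ : ℂ) ^ 2 + (m : ℂ) ^ 2) ^ (-(μ / 2)))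
      = ((Real.pi : ℝ) : ℂ) ^ ((d : ℂ) / 2) * (m : ℂ) ^ ((d : ℂ) - μ) *
        Complex.Gamma ((μ - (d : ℂ)) / 2) / Complex.Gamma (μ / 2) := by
  haveI : Nonempty (Fin d) := Fin.pos_iff_nonempty.mp hd
  have hd1 : (1:ℝ) ≤ (d:ℝ) := by exact_mod_cast hd
  have hb : ∀ p : EuclideanSpace ℝ (Fin d),
      ((‖p‖:ℂ)^2 + (m:ℂ)^2) = ((‖p‖^2 + m^2 : ℝ) : ℂ) := fun p => by push_cast; ring
  set r : ℝ := μ.re with hrdef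
  have hr0 : (0:ℝ) < r := lt_of_le_of_lt (by linarith) hμ
  have hmeas : AEStronglyMeasurable (fun p : EuclideanSpace ℝ (Fin d) =>
      ((‖p‖:ℂ)^2 + (m:ℂ)^2) ^ (-(μ/2))) volume := by
    refine Continuous.aestronglyMeasurable ?_
    simp only [hb]
    refine Continuous.cpow (by continuity) continuous_const fun x => ?_
    exact Complex.ofReal_mem_slitPlane.2 (by positivity)
  have hnorm : ∀ p : EuclideanSpace ℝ (Fin d),
      ‖((‖p‖:ℂ)^2 + (m:ℂ)^2) ^ (-(μ/2))‖ = (‖p‖^2 + m^2) ^ (-(r/2)) := by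
    intro p
    rw [hb p, Complex.norm_cpow_eq_rpow_re_of_pos (by positivity)]
    congr 1
    simp [Complex.neg_re, Complex.div_ofNat_re, hrdef]
  set c0 : ℝ := min 1 (m^2) with hc0def
  have hc0 : 0 < c0 := lt_min one_pos (by positivity)
  have hint : Integrable (fun p : EuclideanSpace ℝ (Fin d) =>
      ((‖p‖:ℂ)^2 + (m:ℂ)^2) ^ (-(μ/2))) := by
    have hnr : (Module.finrank ℝ (EuclideanSpace ℝ (Fin d)) : ℝ) < r := by
      rw [finrank_euclideanSpace_fin]; exact hμ
    have hgint := (integrable_rpow_neg_one_add_norm_sq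
      (E := EuclideanSpace ℝ (Fin d)) (μ := volume) hnr).const_mul (c0 ^ (-(r/2)))
    simp only [neg_div] at hgint
    refine hgint.mono' hmeas (Filter.Eventually.of_forall fun p => ?_)
    rw [hnorm p]
    have h1 : c0 * (1 + ‖p‖^2) ≤ ‖p‖^2 + m^2 := by
      have e1 : c0 ≤ 1 := min_le_left _ _
      have e2 : c0 ≤ m^2 := min_le_right _ _
      have e3 : (0:ℝ) ≤ ‖p‖^2 := by positivity
      nlinarith
    calc (‖p‖^2 + m^2) ^ (-(r/2)) ≤ (c0 * (1 + ‖p‖^2)) ^ (-(r/2)) := by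
          refine Real.rpow_le_rpow_of_nonpos (by positivity) h1 (by linarith)
      _ = c0 ^ (-(r/2)) * (1 + ‖p‖^2) ^ (-(r/2)) :=
          Real.mul_rpow hc0.le (by positivity)
  refine ⟨hint, ?_⟩
  haveI : Nontrivial (EuclideanSpace ℝ (Fin d)) := inferInstance
  have key := MeasureTheory.integral_fun_norm_addHaar
    (E := EuclideanSpace ℝ (Fin d)) volume
    (fun y : ℝ => ((y:ℂ)^2 + (m:ℂ)^2) ^ (-(μ/2)))
  rw [finrank_euclideanSpace_fin] at key
  rw [show (∫ p : EuclideanSpace ℝ (Fin d), ((‖p‖:ℂ)^2 + (m:ℂ)^2) ^ (-(μ/2)))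
      = d • (volume (Metric.ball (0 : EuclideanSpace ℝ (Fin d)) 1)).toReal •
        ∫ y in Ioi (0:ℝ), y ^ (d-1) • ((y:ℂ)^2 + (m:ℂ)^2) ^ (-(μ/2)) from key]
  rw [EuclideanSpace.volume_ball, oneDim d hd hm hμ]
  simp only [Fintype.card_fin, ENNReal.ofReal_one, one_pow, one_mul,
    ENNReal.toReal_ofReal (by positivity : (0:ℝ) ≤ Real.sqrt π ^ d / Real.Gamma ((d:ℝ)/2 + 1))]
  have hsq : Real.sqrt π ^ d = π ^ ((d:ℝ)/2) := by
    rw [Real.sqrt_eq_rpow, ← Real.rpow_natCast (π ^ ((1:ℝ)/2)) d,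
      ← Real.rpow_mul Real.pi_pos.le]
    congr 1
    ring
  have hpic : ((π ^ ((d:ℝ)/2) : ℝ) : ℂ) = ((π:ℝ):ℂ) ^ ((d:ℂ)/2) := by
    rw [Complex.ofReal_cpow Real.pi_pos.le]
    congr 1
    push_cast
    ring
  have hgam : ((Real.Gamma ((d:ℝ)/2 + 1) : ℝ) : ℂ) = ((d:ℂ)/2) * Complex.Gamma ((d:ℂ)/2) := by
    rw [Real.Gamma_add_one (ne_of_gt (by linarith : (0:ℝ) < (d:ℝ)/2))]
    push_cast [← Complex.Gamma_ofReal]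
    ring
  have hGdne : Complex.Gamma ((d:ℂ)/2) ≠ 0 := by
    refine Complex.Gamma_ne_zero_of_re_pos ?_
    simp only [Complex.div_ofNat_re, Complex.natCast_re]
    positivity
  have hdne : ((d:ℂ)) ≠ 0 := by exact_mod_cast (by omega : (d:ℤ) ≠ 0)
  rw [nsmul_eq_mul, Complex.real_smul, Complex.ofReal_div, hsq, hpic, hgam]
  have hGμne : Complex.Gamma (μ/2) ≠ 0 := by
    refine Complex.Gamma_ne_zero_of_re_pos ?_
    simp only [Complex.div_ofNat_re]
    linarith
  field_simp
end

section
/- Let α ∈ ℂ and z ∈ ℂ with Re z > 0. Then U_α(z) = z^{-α} U_{-α}(z); equivalently, ∫_0^∞ e^{-t - z/t} t^{-α-1} dt = z^{-α} ∫_0^∞ e^{-t - z/t} t^{α-1} dt. -/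
open MeasureTheory Complex Set Filter
open scoped Real

namespace Stmt6Aux

lemma re_aux (z : ℂ) (t : ℝ) : (-(t:ℂ) - z / t).re = -t - z.re / t := by
  simp [Complex.sub_re]

lemma norm_eq (β z : ℂ) {t : ℝ} (ht : 0 < t) :
    ‖Complex.exp (-(t:ℂ) - z / t) * (t:ℂ) ^ β‖
      = Real.exp (-t - z.re / t) * t ^ β.re := by
  rw [norm_mul, Complex.norm_exp,
    Complex.norm_cpow_eq_rpow_re_of_pos ht, re_aux]

lemma contOn (β z : ℂ) :
    ContinuousOn (fun t : ℝ => Complex.exp (-(t:ℂ) - z / t) * (t:ℂ) ^ β) (Ioi 0) := by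
  apply ContinuousOn.mul
  · apply Complex.continuous_exp.comp_continuousOn
    exact (Complex.continuous_ofReal.continuousOn.neg).sub
      (continuousOn_const.div Complex.continuous_ofReal.continuousOn
        (fun t ht => Complex.ofReal_ne_zero.mpr (ne_of_gt ht)))
  · exact Complex.continuous_ofReal.continuousOn.cpow continuousOn_const
      (fun t ht => Or.inl (by simpa using (mem_Ioi.mp ht)))

lemma meas_aux (β z : ℂ) :
    AEStronglyMeasurable (fun t : ℝ => Complex.exp (-(t:ℂ) - z / t) * (t:ℂ) ^ β)
      (volume.restrict (Ioi 0)) :=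
  (contOn β z).aestronglyMeasurable measurableSet_Ioi

lemma integrable_bound {ε : ℝ} (hε : 0 < ε) (s : ℝ) :
    IntegrableOn (fun t : ℝ => Real.exp (-t - ε / t) * t ^ s) (Ioi 0) := by
  have hmeas : Measurable (fun t : ℝ => Real.exp (-t - ε / t) * t ^ s) := by
    fun_prop
  set n : ℕ := ⌈|s|⌉₊ with hn
  have hsn : |s| ≤ (n : ℝ) := Nat.le_ceil _
  rw [← Ioc_union_Ioi_eq_Ioi (zero_le_one (α := ℝ))]
  apply IntegrableOn.union
  · -- Ioc 0 1 : bounded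
    apply Measure.integrableOn_of_bounded (M := n.factorial / ε ^ n)
    · exact ((measure_Ioc_lt_top).ne)
    · exact hmeas.aestronglyMeasurable
    · rw [ae_restrict_iff' measurableSet_Ioc]
      refine ae_of_all _ (fun t ht => ?_)
      obtain ⟨ht0, ht1⟩ := ht
      have hεt : (0:ℝ) < ε / t := div_pos hε ht0
      have h1 : Real.exp (-t - ε / t) ≤ Real.exp (-(ε / t)) := by
        apply Real.exp_le_exp.mpr; linarith
      have h2 : t ^ s ≤ t ^ (-(n:ℝ)) := by
        apply Real.rpow_le_rpow_of_exponent_ge ht0 ht1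
        linarith [neg_abs_le s]
      have key : (ε/t)^n / n.factorial ≤ Real.exp (ε/t) := by
        have := Real.pow_div_factorial_le_exp (x := ε/t) hεt.le n
        exact this
      have h3 : Real.exp (-(ε / t)) ≤ n.factorial * t ^ n / ε ^ n := by
        rw [Real.exp_neg]
        have hA : ((n.factorial : ℝ) * t ^ n / ε ^ n)⁻¹ ≤ Real.exp (ε/t) := by
          refine le_trans (le_of_eq ?_) key
          rw [div_pow]
          field_simp
        exact inv_le_of_inv_le₀ (by positivity) hA
      have h4 : t ^ (-(n:ℝ)) = (t ^ n)⁻¹ := by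
        rw [Real.rpow_neg ht0.le, Real.rpow_natCast]
      rw [Real.norm_of_nonneg (by positivity)]
      calc Real.exp (-t - ε / t) * t ^ s
          ≤ Real.exp (-(ε/t)) * t ^ (-(n:ℝ)) := by
            apply mul_le_mul h1 h2 (by positivity) (Real.exp_pos _).le
        _ ≤ ((n.factorial : ℝ) * t^n / ε^n) * (t^n)⁻¹ := by
            rw [h4]
            apply mul_le_mul_of_nonneg_right h3 (by positivity)
        _ = (n.factorial : ℝ) / ε ^ n * (t^n * (t^n)⁻¹) := by ring
        _ = (n.factorial : ℝ) / ε ^ n := by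
            rw [mul_inv_cancel₀ (by positivity), mul_one]
  · -- Ioi 1
    have hg : IntegrableOn (fun t : ℝ => Real.exp (-t) * t ^ ((n:ℝ) + 1 - 1)) (Ioi 1) :=
      (Real.GammaIntegral_convergent (by positivity : (0:ℝ) < (n:ℝ)+1)).mono_set
        (Ioi_subset_Ioi zero_le_one)
    apply Integrable.mono' hg hmeas.aestronglyMeasurable
    rw [ae_restrict_iff' measurableSet_Ioi]
    refine ae_of_all _ (fun t ht => ?_)
    have ht1 : (1:ℝ) < t := ht
    have ht0 : (0:ℝ) < t := lt_trans zero_lt_one ht1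
    rw [Real.norm_of_nonneg (by positivity)]
    have h1 : Real.exp (-t - ε / t) ≤ Real.exp (-t) := by
      apply Real.exp_le_exp.mpr
      have : 0 < ε / t := div_pos hε ht0
      linarith
    have h2 : t ^ s ≤ t ^ ((n:ℝ) + 1 - 1) := by
      apply Real.rpow_le_rpow_of_exponent_le ht1.le
      have := le_abs_self s
      linarith
    exact mul_le_mul h1 h2 (by positivity) (Real.exp_pos _).le

lemma key_integrable (β : ℂ) {z : ℂ} (hz : 0 < z.re) :
    IntegrableOn (fun t : ℝ => Complex.exp (-(t:ℂ) - z / t) * (t:ℂ) ^ β) (Ioi 0) := by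
  apply Integrable.mono' (integrable_bound hz β.re) (meas_aux β z)
  rw [ae_restrict_iff' measurableSet_Ioi]
  exact ae_of_all _ (fun t ht => le_of_eq (norm_eq β z ht))

noncomputable def K (β : ℂ) (z : ℂ) : ℂ :=
  ∫ t in Ioi (0:ℝ), Complex.exp (-(t:ℂ) - z / t) * (t:ℂ) ^ β

lemma key_real (α : ℂ) {x : ℝ} (hx : 0 < x) :
    K (-α - 1) x = (x:ℂ) ^ (-α) * K (α - 1) x := by
  have hx' : (x:ℂ) ≠ 0 := Complex.ofReal_ne_zero.mpr hx.ne'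
  set f : ℝ → ℂ := fun t => Complex.exp (-(t:ℂ) - (x:ℂ) / t) * (t:ℂ) ^ (-α - 1) with hf
  set φ : ℝ → ℂ := fun t => (|(-1:ℝ)| * t ^ ((-1:ℝ) - 1)) • f (t ^ (-1:ℝ)) with hφ
  have step1 : (∫ t in Ioi (0:ℝ), φ t) = ∫ t in Ioi (0:ℝ), f t :=
    integral_comp_rpow_Ioi f (by norm_num)
  have step2 : (∫ t in Ioi (0:ℝ), φ (x⁻¹ * t)) = x • ∫ t in Ioi (0:ℝ), φ t := by
    have h := integral_comp_mul_left_Ioi φ 0 (inv_pos.mpr hx)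
    rw [mul_zero] at h
    rw [h, inv_inv]
  have step3 : (∫ t in Ioi (0:ℝ), f t) = ∫ t in Ioi (0:ℝ), x⁻¹ • φ (x⁻¹ * t) := by
    rw [integral_smul, step2, smul_smul, inv_mul_cancel₀ hx.ne', one_smul, step1]
  have step4 : ∀ t ∈ Ioi (0:ℝ),
      x⁻¹ • φ (x⁻¹ * t)
        = (x:ℂ) ^ (-α) * (Complex.exp (-(t:ℂ) - (x:ℂ) / t) * (t:ℂ) ^ (α - 1)) := by
    intro t ht
    have ht0 : 0 < t := ht
    have ht' : (t:ℂ) ≠ 0 := Complex.ofReal_ne_zero.mpr ht0.ne'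
    have hs : 0 < x⁻¹ * t := by positivity
    have hinv : (x⁻¹ * t) ^ ((-1:ℝ)) = x / t := by
      rw [Real.rpow_neg_one, mul_inv, inv_inv, ← div_eq_mul_inv]
    have hexp : (-(↑(x / t) : ℂ) - (x:ℂ) / (↑(x / t) : ℂ)) = -(t:ℂ) - (x:ℂ) / t := by
      push_cast
      field_simp
      ring
    have hcpow : ((↑(x / t) : ℂ)) ^ (-α - 1) = (x:ℂ) ^ (-α - 1) * (t:ℂ) ^ (α + 1) := by
      rw [div_eq_mul_inv, Complex.ofReal_mul]
      rw [show ((x:ℂ) * (↑(t⁻¹):ℂ)) = ((x:ℝ):ℂ) * ((t⁻¹:ℝ):ℂ) by push_cast; ring]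
      rw [mul_cpow_ofReal_nonneg hx.le (inv_nonneg.mpr ht0.le)]
      congr 1
      rw [Complex.ofReal_inv, Complex.inv_cpow _ _ (by
          rw [Complex.arg_ofReal_of_nonneg ht0.le]; exact Real.pi_ne_zero.symm),
        ← Complex.cpow_neg]
      ring_nf
    have hcoef : x⁻¹ * (|(-1:ℝ)| * (x⁻¹ * t) ^ ((-1:ℝ) - 1)) = x * (t ^ 2)⁻¹ := by
      rw [abs_neg, abs_one, one_mul,
        show ((-1:ℝ) - 1) = ((-2:ℤ):ℝ) by norm_num, Real.rpow_intCast,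
        show ((-2:ℤ)) = -((2:ℕ):ℤ) by norm_num, zpow_neg, zpow_natCast]
      field_simp
    have hx1 : (x:ℂ) * (x:ℂ) ^ (-α - 1) = (x:ℂ) ^ (-α) := by
      nth_rewrite 1 [← Complex.cpow_one (x:ℂ)]
      rw [← Complex.cpow_add _ _ hx']
      congr 1
      ring
    have ht1 : (t:ℂ) ^ (α + 1) * (((t:ℂ) ^ 2)⁻¹) = (t:ℂ) ^ (α - 1) := by
      rw [show ((t:ℂ) ^ 2) = (t:ℂ) ^ ((2:ℕ):ℂ) by rw [Complex.cpow_natCast],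
        ← Complex.cpow_neg, ← Complex.cpow_add _ _ ht']
      congr 1
      push_cast
      ring
    have hsmul : x⁻¹ • φ (x⁻¹ * t)
        = (x⁻¹ * (|(-1:ℝ)| * (x⁻¹ * t) ^ ((-1:ℝ) - 1))) • f ((x⁻¹ * t) ^ (-1:ℝ)) := by
      rw [hφ]; simp only [smul_smul]
    rw [hsmul, hcoef, hinv, hf]
    simp only []
    rw [hexp, hcpow]
    rw [Complex.real_smul]
    push_cast
    rw [show ((x:ℂ) * ((t:ℂ)^2)⁻¹) * (Complex.exp (-(t:ℂ) - (x:ℂ)/t) * ((x:ℂ)^(-α-1) * (t:ℂ)^(α+1)))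
        = ((x:ℂ) * (x:ℂ)^(-α-1)) * (Complex.exp (-(t:ℂ) - (x:ℂ)/t) * ((t:ℂ)^(α+1) * ((t:ℂ)^2)⁻¹)) by ring]
    rw [hx1, ht1]
  calc K (-α - 1) (x:ℂ) = ∫ t in Ioi (0:ℝ), f t := rfl
    _ = ∫ t in Ioi (0:ℝ), x⁻¹ • φ (x⁻¹ * t) := step3
    _ = ∫ t in Ioi (0:ℝ), (x:ℂ) ^ (-α) * (Complex.exp (-(t:ℂ) - (x:ℂ) / t) * (t:ℂ) ^ (α - 1)) :=
        setIntegral_congr_fun measurableSet_Ioi step4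
    _ = (x:ℂ) ^ (-α) * K (α - 1) (x:ℂ) := by rw [integral_const_mul]; rfl

lemma hasDerivAt_K (β : ℂ) {z : ℂ} (hz : 0 < z.re) :
    ∃ d, HasDerivAt (K β) d z := by
  have hε : 0 < z.re / 2 := by linarith
  obtain ⟨_, h⟩ := hasDerivAt_integral_of_dominated_loc_of_deriv_le
    (F := fun (w : ℂ) (t : ℝ) => Complex.exp (-(t:ℂ) - w / t) * (t:ℂ) ^ β)
    (F' := fun (w : ℂ) (t : ℝ) => (-(t:ℂ)⁻¹) * (Complex.exp (-(t:ℂ) - w / t) * (t:ℂ) ^ β))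
    (μ := volume.restrict (Ioi 0)) (x₀ := z)
    (bound := fun t => Real.exp (-t - (z.re / 2) / t) * t ^ (β.re - 1))
    (Metric.ball_mem_nhds z hε)
    (Eventually.of_forall (fun w => meas_aux β w))
    (key_integrable β hz)
    (by
      apply ContinuousOn.aestronglyMeasurable _ measurableSet_Ioi
      exact (((Complex.continuous_ofReal.continuousOn).inv₀
        (fun t ht => Complex.ofReal_ne_zero.mpr (ne_of_gt ht))).neg).mul (contOn β z))
    (by
      rw [ae_restrict_iff' measurableSet_Ioi]
      refine ae_of_all _ (fun t ht w hw => ?_)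
      have ht0 : (0:ℝ) < t := ht
      have hwre : z.re / 2 ≤ w.re := by
        have h1 : |(w - z).re| ≤ ‖w - z‖ := Complex.abs_re_le_norm _
        have h2 : ‖w - z‖ < z.re / 2 := mem_ball_iff_norm.mp hw
        have := abs_le.mp (le_of_lt (lt_of_le_of_lt h1 h2))
        simp only [Complex.sub_re] at this
        linarith [this.1]
      rw [norm_mul, norm_eq β w ht0]
      have hnorm : ‖-(t:ℂ)⁻¹‖ = t⁻¹ := by
        rw [norm_neg, ← Complex.ofReal_inv, Complex.norm_real,
          Real.norm_of_nonneg (by positivity)]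
      rw [hnorm]
      have hrw : t⁻¹ * (Real.exp (-t - w.re / t) * t ^ β.re)
          = Real.exp (-t - w.re / t) * t ^ (β.re - 1) := by
        rw [Real.rpow_sub ht0, Real.rpow_one]
        ring
      rw [hrw]
      apply mul_le_mul_of_nonneg_right _ (Real.rpow_nonneg ht0.le _)
      apply Real.exp_le_exp.mpr
      have h3 : z.re / 2 / t ≤ w.re / t := by
        gcongr
      linarith)
    (integrable_bound hε (β.re - 1))
    (by
      rw [ae_restrict_iff' measurableSet_Ioi]
      refine ae_of_all _ (fun t ht w hw => ?_)
      have ht' : (t:ℂ) ≠ 0 := Complex.ofReal_ne_zero.mpr (ne_of_gt ht)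
      have h1 : HasDerivAt (fun w : ℂ => -(t:ℂ) - w / t) (-(t:ℂ)⁻¹) w := by
        simpa using ((hasDerivAt_id w).div_const (t:ℂ)).const_sub (-(t:ℂ))
      have h2 := (h1.cexp).mul_const ((t:ℂ) ^ β)
      convert h2 using 1
      · rfl
      ring)
  exact ⟨_, h⟩


lemma analytic_K (β : ℂ) : AnalyticOnNhd ℂ (K β) {z : ℂ | 0 < z.re} := by
  have hU : IsOpen {z : ℂ | 0 < z.re} := isOpen_lt continuous_const Complex.continuous_re
  apply DifferentiableOn.analyticOnNhd _ hU
  intro z hz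
  obtain ⟨d, h⟩ := hasDerivAt_K β hz
  exact h.differentiableAt.differentiableWithinAt

lemma main_eq (α z : ℂ) (hz : 0 < z.re) :
    K (-α - 1) z = z ^ (-α) * K (α - 1) z := by
  have hU : IsOpen {w : ℂ | 0 < w.re} := isOpen_lt continuous_const Complex.continuous_re
  have hconn : IsPreconnected {w : ℂ | 0 < w.re} :=
    (convex_halfSpace_re_gt 0).isPreconnected
  have hf : AnalyticOnNhd ℂ (K (-α - 1)) {w : ℂ | 0 < w.re} := analytic_K _
  have hg : AnalyticOnNhd ℂ (fun w => w ^ (-α) * K (α - 1) w) {w : ℂ | 0 < w.re} := by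
    apply DifferentiableOn.analyticOnNhd _ hU
    intro w hw
    have h1 : DifferentiableAt ℂ (fun w : ℂ => w ^ (-α)) w := by
      apply DifferentiableAt.cpow differentiableAt_id (differentiableAt_const _)
      exact Or.inl hw
    obtain ⟨d, h2⟩ := hasDerivAt_K (α - 1) hw
    exact (h1.mul h2.differentiableAt).differentiableWithinAt
  have h1U : (1:ℂ) ∈ {w : ℂ | 0 < w.re} := by norm_num
  have freq : ∃ᶠ w in nhdsWithin (1:ℂ) {(1:ℂ)}ᶜ,
      K (-α - 1) w = w ^ (-α) * K (α - 1) w := by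
    have htend : Tendsto (fun n : ℕ => ((1 + ((n:ℝ)+1)⁻¹ : ℝ) : ℂ)) atTop
        (nhdsWithin (1:ℂ) {(1:ℂ)}ᶜ) := by
      apply tendsto_nhdsWithin_of_tendsto_nhds_of_eventually_within
      · have h0 : Tendsto (fun n : ℕ => (1 + ((n:ℝ)+1)⁻¹ : ℝ)) atTop (nhds 1) := by
          have := tendsto_one_div_add_atTop_nhds_zero_nat (𝕜 := ℝ)
          simp only [one_div] at this
          simpa using tendsto_const_nhds.add this
        have h1 := (Complex.continuous_ofReal.tendsto (1:ℝ)).comp h0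
        simpa using h1.congr (fun n => by simp [Function.comp])
      · refine Eventually.of_forall (fun n => ?_)
        simp only [mem_compl_iff, mem_singleton_iff]
        intro hcontra
        have : (1 + ((n:ℝ)+1)⁻¹ : ℝ) = 1 := by exact_mod_cast hcontra
        have hpos : (0:ℝ) < ((n:ℝ)+1)⁻¹ := by positivity
        linarith
    apply htend.frequently
    apply Frequently.of_forall
    intro n
    exact key_real α (x := 1 + ((n:ℝ)+1)⁻¹) (by positivity)
  exact hf.eqOn_of_preconnected_of_frequently_eq hg hconn h1U freq hz

end Stmt6Aux

/-- For `Re z > 0`, `U_α(z) = z^{-α} U_{-α}(z)`, i.e.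
`∫₀^∞ e^{-t-z/t} t^{-α-1} dt = z^{-α} ∫₀^∞ e^{-t-z/t} t^{α-1} dt`. -/
theorem stmt_6 (α z : ℂ) (hz : 0 < z.re) :
    (∫ t in Set.Ioi (0 : ℝ),
        Complex.exp (-(t : ℂ) - z / (t : ℂ)) * (t : ℂ) ^ (-α - 1))
      = z ^ (-α) *
        ∫ t in Set.Ioi (0 : ℝ),
          Complex.exp (-(t : ℂ) - z / (t : ℂ)) * (t : ℂ) ^ (α - 1) := by
  exact Stmt6Aux.main_eq α z hz
end

section
/- For every z ∈ ℂ with Re z > 0, ∫_0^∞ e^{-t - z/t} t^{-1/2} dt = √π e^{-2√z}, where √z is the principal square root; equivalently U_{-1/2}(z) = e^{-2√z}. Consequently ∫_0^∞ e^{-t - z/t} t^{-3/2} dt = √π e^{-2√z}/√z, i.e. U_{1/2}(z) = e^{-2√z}/√z. -/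
open MeasureTheory Complex
open scoped Real

open Set Filter
open scoped Topology

lemma pow_div_le_exp (n : ℕ) {x : ℝ} (hx : 0 ≤ x) : (x / n) ^ n ≤ Real.exp x := by
  rcases Nat.eq_zero_or_pos n with rfl | hn
  · simpa using Real.one_le_exp hx
  have h1 : (x / n) ^ n ≤ (Real.exp (x / n)) ^ n := by
    apply pow_le_pow_left₀ (by positivity)
    linarith [Real.add_one_le_exp (x / n)]
  have h2 : (Real.exp (x / n)) ^ n = Real.exp x := by
    rw [← Real.exp_nat_mul, mul_div_cancel₀]
    exact_mod_cast (Nat.cast_pos.mpr hn).ne'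
  linarith

lemma exp_neg_le (n : ℕ) {x : ℝ} (hx : 0 < x) : Real.exp (-x) ≤ (n / x) ^ n := by
  rcases Nat.eq_zero_or_pos n with rfl | hn
  · simpa using Real.exp_le_one_iff.mpr (neg_nonpos.mpr hx.le)
  have h := pow_div_le_exp n hx.le
  have hp : (0:ℝ) < (x / n) ^ n := by positivity
  have he : (((x / n:ℝ)) ^ n)⁻¹ = ((n:ℝ) / x) ^ n := by rw [← inv_pow, inv_div]
  rw [Real.exp_neg, ← he]
  gcongr


lemma integrable_aux {ε : ℝ} (hε : 0 < ε) (r : ℝ) (n : ℕ) (hn : 0 < r + n + 1) :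
    IntegrableOn (fun t : ℝ => Real.exp (-t - ε / t) * t ^ r) (Set.Ioi 0) := by
  have hmeas : AEStronglyMeasurable (fun t : ℝ => Real.exp (-t - ε / t) * t ^ r)
      (volume.restrict (Set.Ioi 0)) := by
    apply ContinuousOn.aestronglyMeasurable _ measurableSet_Ioi
    exact (((continuousOn_id.neg).sub ((continuousOn_const).div continuousOn_id
      (fun x hx => ne_of_gt hx))).rexp).mul (continuousOn_id.rpow_const
      (fun x hx => Or.inl (ne_of_gt hx)))
  have hg : IntegrableOn (fun t : ℝ => ((n:ℝ) * ε⁻¹) ^ n * (Real.exp (-t) * t ^ (r + n))) (Set.Ioi 0) := by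
    have := (Real.GammaIntegral_convergent (s := r + n + 1) hn).const_mul (((n:ℝ) * ε⁻¹) ^ n)
    simp at this; exact this
  refine Integrable.mono hg hmeas ?_
  filter_upwards [ae_restrict_mem measurableSet_Ioi] with t ht
  have ht0 : (0:ℝ) < t := ht
  have h1 : Real.exp (-(ε / t)) ≤ ((n:ℝ) / (ε / t)) ^ n := exp_neg_le n (by positivity)
  have h2 : ((n:ℝ) / (ε / t)) ^ n = ((n:ℝ) * ε⁻¹) ^ n * t ^ (n:ℕ) := by
    rw [div_div_eq_mul_div, div_eq_mul_inv, mul_pow, mul_pow, mul_comm ((n:ℝ)^n), mul_assoc]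
    ring_nf
  rw [Real.norm_eq_abs, _root_.abs_of_nonneg (by positivity), Real.norm_eq_abs,
    _root_.abs_of_nonneg (by positivity)]
  have key : Real.exp (-t - ε / t) * t ^ r ≤ ((n:ℝ) * ε⁻¹) ^ n * (Real.exp (-t) * t ^ (r + n)) := by
    rw [sub_eq_add_neg, Real.exp_add]
    have htp : t ^ r * t ^ (n:ℝ) = t ^ (r + n) := by rw [← Real.rpow_add ht0]
    calc Real.exp (-t) * Real.exp (-(ε/t)) * t ^ r
        ≤ Real.exp (-t) * (((n:ℝ) * ε⁻¹) ^ n * t ^ (n:ℕ)) * t ^ r := by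
          rw [h2] at h1
          have := mul_le_mul_of_nonneg_left h1 (Real.exp_pos (-t)).le
          exact mul_le_mul_of_nonneg_right this (Real.rpow_nonneg ht0.le r)
      _ = ((n:ℝ) * ε⁻¹) ^ n * (Real.exp (-t) * t ^ (r + n)) := by
          rw [← htp, ← Real.rpow_natCast t n]; ring
  exact key

lemma exp_neg_le' {x : ℝ} (hx : 0 < x) : Real.exp (-x) ≤ x⁻¹ := by
  rw [Real.exp_neg, inv_le_inv₀ (Real.exp_pos _) hx]
  linarith [Real.add_one_le_exp x]

lemma glasser_integrable1 {b : ℝ} (hb : 0 < b) :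
    IntegrableOn (fun u : ℝ => Real.exp (-(u - b/u)^2)) (Set.Ioi 0) := by
  have hmeas : AEStronglyMeasurable (fun u : ℝ => Real.exp (-(u - b/u)^2))
      (volume.restrict (Set.Ioi 0)) := by
    apply ContinuousOn.aestronglyMeasurable _ measurableSet_Ioi
    fun_prop (disch := intro x hx; exact ne_of_gt hx)
  have hg : IntegrableOn (fun u : ℝ => Real.exp (2*b) * Real.exp (-1*u^2)) (Set.Ioi 0) :=
    ((integrable_exp_neg_mul_sq one_pos).const_mul _).integrableOn
  refine Integrable.mono hg hmeas ?_
  filter_upwards [ae_restrict_mem measurableSet_Ioi] with u hu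
  have hu0 : (0:ℝ) < u := hu
  rw [Real.norm_eq_abs, _root_.abs_of_nonneg (Real.exp_pos _).le, Real.norm_eq_abs,
    _root_.abs_of_nonneg (by positivity), ← Real.exp_add]
  apply Real.exp_le_exp.mpr
  have hsq : (0:ℝ) ≤ (b/u)^2 := sq_nonneg _
  have : (u - b/u)^2 = u^2 - 2*b + (b/u)^2 := by field_simp; ring
  nlinarith [sq_nonneg (b/u)]

lemma glasser_integrable2 {b : ℝ} (hb : 0 < b) :
    IntegrableOn (fun u : ℝ => b/u^2 * Real.exp (-(u - b/u)^2)) (Set.Ioi 0) := by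
  have hmeas : AEStronglyMeasurable (fun u : ℝ => b/u^2 * Real.exp (-(u - b/u)^2))
      (volume.restrict (Set.Ioi 0)) := by
    apply ContinuousOn.aestronglyMeasurable _ measurableSet_Ioi
    fun_prop (disch := intro x hx; first | exact ne_of_gt hx | exact pow_ne_zero _ (ne_of_gt hx))
  have hg : IntegrableOn (fun u : ℝ => (b⁻¹ * Real.exp (2*b)) * Real.exp (-1*u^2)) (Set.Ioi 0) :=
    ((integrable_exp_neg_mul_sq one_pos).const_mul _).integrableOn
  refine Integrable.mono hg hmeas ?_
  filter_upwards [ae_restrict_mem measurableSet_Ioi] with u hu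
  have hu0 : (0:ℝ) < u := hu
  rw [Real.norm_eq_abs, _root_.abs_of_nonneg (by positivity), Real.norm_eq_abs,
    _root_.abs_of_nonneg (by positivity)]
  have hexpand : -(u - b/u)^2 = -u^2 + 2*b + -((b/u)^2) := by field_simp; ring
  rw [hexpand, Real.exp_add, Real.exp_add, ← mul_assoc]
  have h1 : Real.exp (-((b/u)^2)) ≤ ((b/u)^2)⁻¹ := exp_neg_le' (by positivity)
  have h2 : b/u^2 * ((b/u)^2)⁻¹ = b⁻¹ := by field_simp
  calc b/u^2 * (Real.exp (-u^2) * Real.exp (2*b)) * Real.exp (-((b/u)^2))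
      ≤ b/u^2 * (Real.exp (-u^2) * Real.exp (2*b)) * ((b/u)^2)⁻¹ := by
        apply mul_le_mul_of_nonneg_left h1 (by positivity)
    _ = b⁻¹ * Real.exp (2*b) * Real.exp (-1*u^2) := by
        rw [neg_one_mul]; field_simp

-- step 1: invariance under u ↦ b/u
lemma glasser_step1 {b : ℝ} (hb : 0 < b) :
    ∫ u in Set.Ioi (0:ℝ), b/u^2 * Real.exp (-(u - b/u)^2)
      = ∫ u in Set.Ioi (0:ℝ), Real.exp (-(u - b/u)^2) := by
  have himg : (fun u : ℝ => b/u) '' Set.Ioi 0 = Set.Ioi 0 := by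
    ext x
    constructor
    · rintro ⟨y, hy, rfl⟩; exact div_pos hb hy
    · intro hx; exact ⟨b/x, div_pos hb hx, by field_simp⟩
  have hderiv : ∀ x ∈ Set.Ioi (0:ℝ),
      HasDerivWithinAt (fun u : ℝ => b/u) (-(b/x^2)) (Set.Ioi 0) x := by
    intro x hx
    have : HasDerivAt (fun u : ℝ => b/u) ((0 * x - b * 1)/x^2) x :=
      (hasDerivAt_const x b).div (hasDerivAt_id x) (ne_of_gt hx)
    rw [show -(b/x^2) = (0 * x - b * 1)/x^2 by ring]; exact this.hasDerivWithinAt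
  have hinj : Set.InjOn (fun u : ℝ => b/u) (Set.Ioi 0) := by
    intro x hx y hy h
    have hx0 : (0:ℝ) < x := hx
    have hy0 : (0:ℝ) < y := hy
    field_simp at h
    exact h.symm
  have := integral_image_eq_integral_abs_deriv_smul measurableSet_Ioi hderiv hinj
    (fun u => Real.exp (-(u - b/u)^2))
  rw [himg] at this
  rw [this]
  apply setIntegral_congr_fun measurableSet_Ioi
  intro x hx
  have hx0 : (0:ℝ) < x := hx
  have h1 : |(-(b/x^2))| = b/x^2 := by rw [abs_neg, _root_.abs_of_pos (by positivity)]
  have h2 : (b/x - b/(b/x)) = -(x - b/x) := by field_simp; ring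
  simp only [smul_eq_mul, h1, h2]
  ring_nf

lemma glasser_step2 {b : ℝ} (hb : 0 < b) :
    ∫ u in Set.Ioi (0:ℝ), (1 + b/u^2) * Real.exp (-(u - b/u)^2) = Real.sqrt π := by
  set f : ℝ → ℝ := fun u => u - b/u with hf
  have himg : f '' Set.Ioi 0 = Set.univ := by
    apply Set.eq_univ_of_forall
    intro v
    set s := Real.sqrt (v^2 + 4*b) with hs
    have hs2 : s^2 = v^2 + 4*b := Real.sq_sqrt (by positivity)
    have hsv : |v| < s := by
      rw [← Real.sqrt_sq_eq_abs]
      exact Real.sqrt_lt_sqrt (sq_nonneg v) (by linarith)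
    have hu0 : 0 < (v + s)/2 := by
      have := neg_abs_le v
      linarith [abs_nonneg v]
    have hvs : v + s ≠ 0 := by linarith
    refine ⟨(v + s)/2, hu0, ?_⟩
    show (v+s)/2 - b/((v+s)/2) = v
    field_simp
    nlinarith
  have hderiv : ∀ x ∈ Set.Ioi (0:ℝ),
      HasDerivWithinAt f (1 + b/x^2) (Set.Ioi 0) x := by
    intro x hx
    have h1 : HasDerivAt (fun u : ℝ => b/u) ((0 * x - b * 1)/x^2) x :=
      (hasDerivAt_const x b).div (hasDerivAt_id x) (ne_of_gt hx)
    have : HasDerivAt f (1 - (0 * x - b * 1)/x^2) x := (hasDerivAt_id x).sub h1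
    rw [show (1 + b/x^2) = 1 - (0 * x - b * 1)/x^2 by ring]; exact this.hasDerivWithinAt
  have hinj : Set.InjOn f (Set.Ioi 0) := by
    apply StrictMonoOn.injOn
    intro x hx y hy hxy
    have hx0 : (0:ℝ) < x := hx
    have hy0 : (0:ℝ) < y := hy
    have : b/y < b/x := by gcongr
    simp only [hf]
    linarith
  have := integral_image_eq_integral_abs_deriv_smul measurableSet_Ioi hderiv hinj
    (fun v => Real.exp (-v^2))
  rw [himg] at this
  have hgauss : ∫ v in (Set.univ : Set ℝ), Real.exp (-v^2) = Real.sqrt π := by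
    rw [Measure.restrict_univ]
    have := integral_gaussian 1
    simpa using this
  rw [← hgauss, this]
  apply setIntegral_congr_fun measurableSet_Ioi
  intro x hx
  have hx0 : (0:ℝ) < x := hx
  have habs : |1 + b/x^2| = 1 + b/x^2 := _root_.abs_of_pos (by positivity)
  simp only [smul_eq_mul, habs, hf]

lemma glasser {b : ℝ} (hb : 0 < b) :
    ∫ u in Set.Ioi (0:ℝ), Real.exp (-(u - b/u)^2) = Real.sqrt π / 2 := by
  have hsplit : ∫ u in Set.Ioi (0:ℝ), (1 + b/u^2) * Real.exp (-(u - b/u)^2)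
      = (∫ u in Set.Ioi (0:ℝ), Real.exp (-(u - b/u)^2))
        + ∫ u in Set.Ioi (0:ℝ), b/u^2 * Real.exp (-(u - b/u)^2) := by
    rw [← integral_add (glasser_integrable1 hb) (glasser_integrable2 hb)]
    apply setIntegral_congr_fun measurableSet_Ioi
    intro x hx
    ring
  rw [glasser_step2 hb, glasser_step1 hb] at hsplit
  linarith

lemma real_main {x : ℝ} (hx : 0 < x) :
    ∫ t in Set.Ioi (0:ℝ), Real.exp (-t - x/t) * t ^ (-(1:ℝ)/2)
      = Real.sqrt π * Real.exp (-(2 * Real.sqrt x)) := by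
  set b := Real.sqrt x with hbdef
  have hb : 0 < b := Real.sqrt_pos.mpr hx
  have hb2 : b^2 = x := Real.sq_sqrt hx.le
  have hsub := integral_comp_rpow_Ioi_of_pos (p := 2)
    (g := fun t => Real.exp (-t - x/t) * t ^ (-(1:ℝ)/2)) two_pos
  have key : ∀ u ∈ Set.Ioi (0:ℝ),
      (2 * u ^ ((2:ℝ) - 1)) • (Real.exp (-(u^(2:ℝ)) - x/(u^(2:ℝ))) * (u^(2:ℝ)) ^ (-(1:ℝ)/2))
        = 2 * Real.exp (-(2*b)) * Real.exp (-(u - b/u)^2) := by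
    intro u hu
    have hu0 : (0:ℝ) < u := hu
    have h1 : u ^ ((2:ℝ) - 1) = u := by norm_num
    have h2 : u ^ (2:ℝ) = u^2 := by rw [← Real.rpow_natCast u 2]; norm_num
    have h3 : (u^(2:ℝ)) ^ (-(1:ℝ)/2) = u⁻¹ := by
      rw [← Real.rpow_mul hu0.le]
      norm_num
      exact Real.rpow_neg_one u
    have h4 : -(u^2) - x/(u^2) = -(2*b) + (-(u - b/u)^2) := by
      field_simp
      nlinarith [hb2]
    rw [h1, h3, smul_eq_mul, h2, h4, Real.exp_add]
    field_simp
  rw [← hsub]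
  rw [setIntegral_congr_fun measurableSet_Ioi key]
  rw [integral_const_mul, glasser hb]
  ring

-- norm of complex integrand
lemma norm_integrand (z : ℂ) (c : ℂ) {t : ℝ} (ht : 0 < t) :
    ‖Complex.exp (-(t:ℂ) - z / (t:ℂ)) * (t:ℂ) ^ c‖
      = Real.exp (-t - z.re / t) * t ^ c.re := by
  rw [norm_mul, Complex.norm_exp,
    Complex.norm_cpow_eq_rpow_re_of_pos ht]
  congr 2
  simp [Complex.sub_re, Complex.neg_re, Complex.div_ofReal_re]

-- measurability of complex integrand
lemma meas_integrand (z : ℂ) (c : ℂ) :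
    AEStronglyMeasurable (fun t : ℝ => Complex.exp (-(t:ℂ) - z / (t:ℂ)) * (t:ℂ) ^ c)
      (volume.restrict (Set.Ioi 0)) := by
  apply ContinuousOn.aestronglyMeasurable _ measurableSet_Ioi
  apply ContinuousOn.mul
  · apply Continuous.comp_continuousOn Complex.continuous_exp
    apply ContinuousOn.sub
    · exact (Complex.continuous_ofReal.neg).continuousOn
    · exact continuousOn_const.div (Complex.continuous_ofReal.continuousOn)
        (fun x hx => by exact_mod_cast ne_of_gt (show (0:ℝ) < x from hx))
  · apply ContinuousOn.cpow
    · exact Complex.continuous_ofReal.continuousOn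
    · exact continuousOn_const
    · intro x hx
      exact Complex.ofReal_mem_slitPlane.mpr hx

lemma int_cx {z : ℂ} (hz : 0 < z.re) (c : ℂ) (n : ℕ) (hn : 0 < c.re + n + 1) :
    IntegrableOn (fun t : ℝ => Complex.exp (-(t:ℂ) - z / (t:ℂ)) * (t:ℂ) ^ c) (Set.Ioi 0) := by
  refine Integrable.mono (integrable_aux hz c.re n hn) (meas_integrand z c) ?_
  filter_upwards [ae_restrict_mem measurableSet_Ioi] with t ht
  have ht0 : (0:ℝ) < t := ht
  rw [norm_integrand z c ht0, Real.norm_eq_abs, _root_.abs_of_nonneg (by positivity)]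

lemma cpow_split {t : ℝ} (ht : 0 < t) :
    (t:ℂ) ^ (-(3:ℂ)/2) = (t:ℂ) ^ (-(1:ℂ)/2) * ((t:ℂ))⁻¹ := by
  have ht0 : (t:ℂ) ≠ 0 := by exact_mod_cast ne_of_gt ht
  rw [← Complex.cpow_neg_one, ← Complex.cpow_add _ _ ht0]
  norm_num

lemma deriv_main {z₀ : ℂ} (hz : 0 < z₀.re) :
    HasDerivAt (fun z => ∫ t in Set.Ioi (0:ℝ),
        Complex.exp (-(t:ℂ) - z / (t:ℂ)) * (t:ℂ) ^ (-(1:ℂ)/2))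
      (∫ t in Set.Ioi (0:ℝ),
        -(Complex.exp (-(t:ℂ) - z₀ / (t:ℂ)) * (t:ℂ) ^ (-(3:ℂ)/2))) z₀ := by
  set ε := z₀.re / 2 with hε
  have hε0 : 0 < ε := by positivity
  have key := hasDerivAt_integral_of_dominated_loc_of_deriv_le (μ := volume.restrict (Set.Ioi 0))
    (F := fun z t => Complex.exp (-(t:ℂ) - z / (t:ℂ)) * (t:ℂ) ^ (-(1:ℂ)/2))
    (F' := fun z t => -(Complex.exp (-(t:ℂ) - z / (t:ℂ)) * (t:ℂ) ^ (-(3:ℂ)/2)))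
    (x₀ := z₀) (bound := fun t => Real.exp (-t - ε/t) * t ^ (-(3:ℝ)/2))
    (Metric.ball_mem_nhds z₀ hε0) (Eventually.of_forall (fun z => meas_integrand z _))
    (int_cx hz _ 1 (by norm_num))
    ((meas_integrand z₀ _).neg)
    ?_ (integrable_aux hε0 _ 2 (by norm_num)) ?_
  · exact key.2
  · filter_upwards [ae_restrict_mem measurableSet_Ioi] with t ht
    intro z hzball
    have ht0 : (0:ℝ) < t := ht
    have hre : ε ≤ z.re := by
      have h1 : |z.re - z₀.re| ≤ ‖z - z₀‖ := by
        simpa using Complex.abs_re_le_norm (z - z₀)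
      have h2 : ‖z - z₀‖ < ε := by
        rw [Metric.mem_ball, Complex.dist_eq] at hzball; exact hzball
      have h3 := abs_le.mp (h1.trans h2.le)
      simp only [hε] at h3 ⊢
      linarith [h3.1]
    rw [norm_neg, norm_integrand z _ ht0]
    have hcre : (-(3:ℂ)/2).re = (-(3:ℝ)/2) := by norm_num
    rw [hcre]
    apply mul_le_mul_of_nonneg_right _ (Real.rpow_nonneg ht0.le _)
    apply Real.exp_le_exp.mpr
    have : ε / t ≤ z.re / t := by gcongr
    linarith
  · filter_upwards [ae_restrict_mem measurableSet_Ioi] with t ht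
    intro z hzball
    have ht0 : (0:ℝ) < t := ht
    have htC : (t:ℂ) ≠ 0 := by exact_mod_cast ne_of_gt ht0
    have h1 : HasDerivAt (fun z : ℂ => -(t:ℂ) - z / (t:ℂ)) (-(1/(t:ℂ))) z := by
      have := ((hasDerivAt_id z).div_const ((t:ℂ))).const_sub (-(t:ℂ))
      simpa using this
    have h2 := (h1.cexp).mul_const ((t:ℂ) ^ (-(1:ℂ)/2))
    refine h2.congr_deriv ?_
    rw [cpow_split ht0]
    field_simp

lemma cx_real {x : ℝ} (hx : 0 < x) :
    (∫ t in Set.Ioi (0:ℝ), Complex.exp (-(t:ℂ) - (x:ℂ) / (t:ℂ)) * (t:ℂ) ^ (-(1:ℂ)/2))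
      = ((Real.sqrt Real.pi : ℝ) : ℂ) * Complex.exp (-2 * (x:ℂ) ^ ((1:ℂ)/2)) := by
  have hx12 : (x:ℂ) ^ ((1:ℂ)/2) = ((Real.sqrt x : ℝ) : ℂ) := by
    rw [Real.sqrt_eq_rpow, Complex.ofReal_cpow hx.le]
    norm_num
  have hint : ∀ t ∈ Set.Ioi (0:ℝ),
      Complex.exp (-(t:ℂ) - (x:ℂ) / (t:ℂ)) * (t:ℂ) ^ (-(1:ℂ)/2)
        = ((Real.exp (-t - x/t) * t ^ (-(1:ℝ)/2) : ℝ) : ℂ) := by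
    intro t ht
    have ht0 : (0:ℝ) < t := ht
    rw [Complex.ofReal_mul, Complex.ofReal_exp, Complex.ofReal_cpow ht0.le]
    push_cast
    norm_num
  rw [setIntegral_congr_fun measurableSet_Ioi hint,
    show (∫ t in Set.Ioi (0:ℝ), ((Real.exp (-t - x/t) * t ^ (-(1:ℝ)/2) : ℝ) : ℂ))
      = ((∫ t in Set.Ioi (0:ℝ), Real.exp (-t - x/t) * t ^ (-(1:ℝ)/2) : ℝ) : ℂ) from
      integral_ofReal, real_main hx, hx12]
  rw [Complex.ofReal_mul, Complex.ofReal_exp]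
  push_cast
  norm_num

/-- For `Re z > 0`, `∫₀^∞ e^{-t-z/t} t^{-1/2} dt = √π e^{-2√z}`
(i.e. `U_{-1/2}(z) = e^{-2√z}`) and `∫₀^∞ e^{-t-z/t} t^{-3/2} dt = √π e^{-2√z}/√z`
(i.e. `U_{1/2}(z) = e^{-2√z}/√z`), with principal square roots. -/
theorem stmt_8 (z : ℂ) (hz : 0 < z.re) :
    (∫ t in Set.Ioi (0 : ℝ),
        Complex.exp (-(t : ℂ) - z / (t : ℂ)) * (t : ℂ) ^ (-(1 : ℂ) / 2))
      = ((Real.sqrt Real.pi : ℝ) : ℂ) * Complex.exp (-2 * z ^ ((1 : ℂ) / 2)) ∧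
    (∫ t in Set.Ioi (0 : ℝ),
        Complex.exp (-(t : ℂ) - z / (t : ℂ)) * (t : ℂ) ^ (-(3 : ℂ) / 2))
      = ((Real.sqrt Real.pi : ℝ) : ℂ) * Complex.exp (-2 * z ^ ((1 : ℂ) / 2)) /
          z ^ ((1 : ℂ) / 2) := by
  set U : Set ℂ := {w : ℂ | 0 < w.re} with hU
  have hUopen : IsOpen U := isOpen_lt continuous_const Complex.continuous_re
  set F : ℂ → ℂ := fun w => ∫ t in Set.Ioi (0:ℝ),
    Complex.exp (-(t:ℂ) - w / (t:ℂ)) * (t:ℂ) ^ (-(1:ℂ)/2) with hF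
  set R : ℂ → ℂ := fun w => ((Real.sqrt Real.pi : ℝ):ℂ) * Complex.exp (-2 * w ^ ((1:ℂ)/2))
    with hR
  have hRdiff : ∀ w ∈ U, HasDerivAt R
      (((Real.sqrt Real.pi : ℝ):ℂ) * (Complex.exp (-2 * w ^ ((1:ℂ)/2)) *
        (-2 * ((1:ℂ)/2 * w ^ ((1:ℂ)/2 - 1))))) w := by
    intro w hw
    have hslit : w ∈ Complex.slitPlane := Or.inl hw
    have h1 : HasDerivAt (fun w : ℂ => w ^ ((1:ℂ)/2)) ((1:ℂ)/2 * w ^ ((1:ℂ)/2 - 1)) w :=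
      (Complex.hasStrictDerivAt_cpow_const hslit).hasDerivAt
    exact ((h1.const_mul (-2)).cexp).const_mul _
  have hFanal : AnalyticOnNhd ℂ F U := by
    apply DifferentiableOn.analyticOnNhd _ hUopen
    intro w hw
    exact ((deriv_main hw).differentiableAt).differentiableWithinAt
  have hRanal : AnalyticOnNhd ℂ R U := by
    apply DifferentiableOn.analyticOnNhd _ hUopen
    intro w hw
    exact ((hRdiff w hw).differentiableAt).differentiableWithinAt
  have hfreq : ∃ᶠ w in nhdsWithin (1:ℂ) {(1:ℂ)}ᶜ, F w = R w := by
    have hseq : Filter.Tendsto (fun n : ℕ => ((1 + ((n:ℝ)+1)⁻¹ : ℝ) : ℂ)) atTop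
        (nhdsWithin (1:ℂ) {(1:ℂ)}ᶜ) := by
      rw [tendsto_nhdsWithin_iff]
      constructor
      · have h0 : Filter.Tendsto (fun n : ℕ => (1 + ((n:ℝ)+1)⁻¹ : ℝ)) atTop (nhds 1) := by
          have := tendsto_one_div_add_atTop_nhds_zero_nat (𝕜 := ℝ)
          simpa [one_div] using (tendsto_const_nhds (x := (1:ℝ))).add this
        exact Complex.ofReal_one ▸ (Complex.continuous_ofReal.tendsto 1).comp h0
      · filter_upwards with n
        simp only [Set.mem_compl_iff, Set.mem_singleton_iff]
        intro h
        have h2 := congrArg Complex.re h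
        simp only [Complex.ofReal_re, Complex.one_re] at h2
        have : (0:ℝ) < ((n:ℝ)+1)⁻¹ := by positivity
        linarith
    apply hseq.frequently
    apply Filter.Eventually.frequently
    filter_upwards with n
    exact cx_real (by positivity)
  have heq : Set.EqOn F R U :=
    hFanal.eqOn_of_preconnected_of_frequently_eq hRanal
      (convex_halfSpace_re_gt 0).isPreconnected (show (1:ℂ) ∈ U by simp [hU]) hfreq
  have hzU : z ∈ U := hz
  refine ⟨heq hzU, ?_⟩
  have hD := deriv_main hz
  have hFR : F =ᶠ[nhds z] R := Filter.eventuallyEq_of_mem (hUopen.mem_nhds hzU) heq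
  have hD' : HasDerivAt R (∫ t in Set.Ioi (0:ℝ),
      -(Complex.exp (-(t:ℂ) - z / (t:ℂ)) * (t:ℂ) ^ (-(3:ℂ)/2))) z := by
    rwa [hFR.hasDerivAt_iff] at hD
  have huniq := hD'.unique (hRdiff z hzU)
  rw [integral_neg] at huniq
  have hzs : z ^ ((1:ℂ)/2 - 1) = (z ^ ((1:ℂ)/2))⁻¹ := by
    have h : (1:ℂ)/2 - 1 = -((1:ℂ)/2) := by ring
    rw [h, Complex.cpow_neg]
  rw [hzs] at huniq
  have hzne : z ^ ((1:ℂ)/2) ≠ 0 := by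
    intro h
    rw [Complex.cpow_eq_zero_iff] at h
    rcases h with ⟨h1, -⟩
    rw [h1] at hz
    simp at hz
  have goal2 : (∫ t in Set.Ioi (0:ℝ), Complex.exp (-(t:ℂ) - z / (t:ℂ)) * (t:ℂ) ^ (-(3:ℂ)/2))
      = ((Real.sqrt Real.pi : ℝ):ℂ) * Complex.exp (-2 * z ^ ((1:ℂ)/2)) * (z ^ ((1:ℂ)/2))⁻¹ := by
    linear_combination -huniq
  rw [goal2]
  ring
end

section
/- Let α ∈ ℂ and z ∈ ℂ with Re z > 0. Then the function w ↦ ∫_0^∞ e^{-t - w/t} t^{-α-1} dt is complex differentiable at z with derivative −∫_0^∞ e^{-t - z/t} t^{-α-2} dt (i.e. ∂_z U_α(z) = −U_{α+1}(z)), and moreover z·(−∫_0^∞ e^{-t - z/t} t^{-α-2} dt) + α·∫_0^∞ e^{-t - z/t} t^{-α-1} dt = −∫_0^∞ e^{-t - z/t} t^{-α} dt (i.e. (z∂_z + α)U_α(z) = −U_{α-1}(z)). -/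
open MeasureTheory Complex Set Filter Topology
open scoped Real

/-- norm of the integrand -/
lemma stmt9_norm (z β : ℂ) {t : ℝ} (ht : 0 < t) :
    ‖Complex.exp (-(t : ℂ) - z / (t : ℂ)) * (t : ℂ) ^ β‖
      = Real.exp (-t - z.re / t) * t ^ β.re := by
  rw [norm_mul, Complex.norm_exp,
    Complex.norm_cpow_eq_rpow_re_of_pos ht]
  congr 2
  simp

/-- continuity of the integrand -/
lemma stmt9_cont (w β : ℂ) :
    ContinuousOn (fun t : ℝ => Complex.exp (-(t : ℂ) - w / (t : ℂ)) * (t : ℂ) ^ β)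
      (Ioi (0 : ℝ)) := by
  apply ContinuousOn.mul
  · apply Continuous.comp_continuousOn Complex.continuous_exp
    apply ContinuousOn.sub
    · exact (Complex.continuous_ofReal.neg).continuousOn
    · exact continuousOn_const.div Complex.continuous_ofReal.continuousOn
        (fun t ht => by exact_mod_cast (ne_of_gt ht))
  · exact Complex.continuous_ofReal.continuousOn.cpow continuousOn_const
      (fun t ht => Or.inl (by exact_mod_cast ht))

/-- real integrability of the dominating function -/
lemma stmt9_int_real (c b : ℝ) (hc : 0 < c) :
    IntegrableOn (fun t : ℝ => Real.exp (-t - c / t) * t ^ b) (Ioi (0 : ℝ)) := by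
  set n : ℕ := ⌈|b|⌉₊ + 1 with hn
  have hs : (0 : ℝ) < b + n + 1 := by
    have : |b| < n := by
      calc |b| ≤ ⌈|b|⌉₊ := Nat.le_ceil _
      _ < n := by exact_mod_cast Nat.lt_succ_self _
    nlinarith [neg_abs_le b]
  have hK : (0:ℝ) < (Nat.factorial n : ℝ) / c ^ n := by positivity
  have hG : IntegrableOn (fun t : ℝ => ((Nat.factorial n : ℝ) / c ^ n) * (Real.exp (-t) * t ^ (b + n)))
      (Ioi (0:ℝ)) := by
    have := (Real.GammaIntegral_convergent hs).const_mul ((Nat.factorial n : ℝ) / c ^ n)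
    simp at this; exact this
  refine Integrable.mono' hG ?_ ?_
  · apply ContinuousOn.aestronglyMeasurable ?_ measurableSet_Ioi
    apply ContinuousOn.mul
    · exact (Real.continuous_exp.comp_continuousOn
        ((continuous_neg.continuousOn).sub
          (continuousOn_const.div continuousOn_id (fun t ht => ne_of_gt ht))))
    · exact continuousOn_id.rpow_const (fun t ht => Or.inl (ne_of_gt ht))
  · filter_upwards [ae_restrict_mem measurableSet_Ioi] with t ht
    have ht0 : (0:ℝ) < t := ht
    rw [Real.norm_of_nonneg (by positivity)]
    have h1 : Real.exp (-(c / t)) ≤ ((Nat.factorial n : ℝ) / c ^ n) * t ^ (n : ℕ) := by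
      have h2 : (c / t) ^ n / (Nat.factorial n : ℝ) ≤ Real.exp (c / t) :=
        Real.pow_div_factorial_le_exp _ (by positivity) n
      rw [Real.exp_neg]
      rw [inv_le_iff_one_le_mul₀ (Real.exp_pos _)]
      calc (1:ℝ) = ((c/t)^n / (Nat.factorial n : ℝ)) * ((Nat.factorial n : ℝ) / c ^ n * t ^ n) := by
            field_simp
            rw [← mul_pow, div_mul_cancel₀ _ ht0.ne']
        _ ≤ Real.exp (c/t) * ((Nat.factorial n : ℝ) / c ^ n * t ^ n) := by
            apply mul_le_mul_of_nonneg_right h2 (by positivity)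
        _ = (Nat.factorial n : ℝ) / c ^ n * t ^ n * Real.exp (c/t) := by ring
    calc Real.exp (-t - c / t) * t ^ b
        = Real.exp (-t) * Real.exp (-(c/t)) * t ^ b := by
          rw [← Real.exp_add]; ring_nf
      _ ≤ Real.exp (-t) * (((Nat.factorial n : ℝ) / c ^ n) * t ^ (n:ℕ)) * t ^ b := by
          apply mul_le_mul_of_nonneg_right _ (by positivity)
          exact mul_le_mul_of_nonneg_left h1 (Real.exp_pos _).le
      _ = ((Nat.factorial n : ℝ) / c ^ n) * (Real.exp (-t) * t ^ (b + n)) := by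
          rw [Real.rpow_add ht0, ← Real.rpow_natCast t n]
          ring

/-- complex integrability -/
lemma stmt9_int (z β : ℂ) (hz : 0 < z.re) :
    IntegrableOn (fun t : ℝ => Complex.exp (-(t : ℂ) - z / (t : ℂ)) * (t : ℂ) ^ β)
      (Ioi (0 : ℝ)) := by
  refine Integrable.mono' (stmt9_int_real z.re β.re hz)
    ((stmt9_cont z β).aestronglyMeasurable measurableSet_Ioi) ?_
  filter_upwards [ae_restrict_mem measurableSet_Ioi] with t ht
  rw [stmt9_norm z β ht]

lemma stmt9_top (z β : ℂ) (hz : 0 < z.re) :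
    Tendsto (fun t : ℝ => Complex.exp (-(t : ℂ) - z / (t : ℂ)) * (t : ℂ) ^ β)
      atTop (𝓝 0) := by
  rw [tendsto_zero_iff_norm_tendsto_zero]
  have hg : Tendsto (fun t : ℝ => t ^ β.re * Real.exp (-1 * t)) atTop (𝓝 0) :=
    tendsto_rpow_mul_exp_neg_mul_atTop_nhds_zero β.re 1 one_pos
  have hle : ∀ᶠ t : ℝ in atTop,
      ‖Complex.exp (-(t : ℂ) - z / (t : ℂ)) * (t : ℂ) ^ β‖ ≤ t ^ β.re * Real.exp (-1 * t) := by
    filter_upwards [eventually_gt_atTop (0:ℝ)] with t ht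
    rw [stmt9_norm z β ht, mul_comm]
    apply mul_le_mul_of_nonneg_left _ (Real.rpow_nonneg ht.le _)
    apply Real.exp_le_exp.2
    have : 0 < z.re / t := by positivity
    linarith
  exact squeeze_zero' (Eventually.of_forall fun t => norm_nonneg _) hle hg

lemma stmt9_bot (z β : ℂ) (hz : 0 < z.re) :
    Tendsto (fun t : ℝ => Complex.exp (-(t : ℂ) - z / (t : ℂ)) * (t : ℂ) ^ β)
      (𝓝[>] (0:ℝ)) (𝓝 0) := by
  rw [tendsto_zero_iff_norm_tendsto_zero]
  have hg : Tendsto (fun t : ℝ => (t⁻¹) ^ (-β.re) * Real.exp (-z.re * t⁻¹))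
      (𝓝[>] (0:ℝ)) (𝓝 0) :=
    (tendsto_rpow_mul_exp_neg_mul_atTop_nhds_zero (-β.re) z.re hz).comp
      tendsto_inv_nhdsGT_zero
  have hle : ∀ᶠ t : ℝ in 𝓝[>] (0:ℝ),
      ‖Complex.exp (-(t : ℂ) - z / (t : ℂ)) * (t : ℂ) ^ β‖
        ≤ (t⁻¹) ^ (-β.re) * Real.exp (-z.re * t⁻¹) := by
    filter_upwards [self_mem_nhdsWithin] with t ht
    have ht0 : (0:ℝ) < t := ht
    rw [stmt9_norm z β ht0]
    have h1 : (t⁻¹) ^ (-β.re) = t ^ β.re := by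
      rw [Real.inv_rpow ht0.le, Real.rpow_neg ht0.le, inv_inv]
    have h2 : -z.re * t⁻¹ = -(z.re / t) := by ring
    rw [h1, h2, mul_comm]
    apply mul_le_mul_of_nonneg_left _ (Real.rpow_nonneg ht0.le _)
    apply Real.exp_le_exp.2
    linarith
  exact squeeze_zero' (Eventually.of_forall fun t => norm_nonneg _) hle hg

lemma stmt9_deriv_t (z α : ℂ) {t : ℝ} (ht : 0 < t) :
    HasDerivAt (fun s : ℝ => Complex.exp (-(s : ℂ) - z / (s : ℂ)) * (s : ℂ) ^ (-α))
      (-(Complex.exp (-(t : ℂ) - z / (t : ℂ)) * (t : ℂ) ^ (-α))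
        + (z * (Complex.exp (-(t : ℂ) - z / (t : ℂ)) * (t : ℂ) ^ (-α - 2))
          - α * (Complex.exp (-(t : ℂ) - z / (t : ℂ)) * (t : ℂ) ^ (-α - 1)))) t := by
  have hT : (t : ℂ) ≠ 0 := by exact_mod_cast ht.ne'
  have hslit : (t : ℂ) ∈ Complex.slitPlane := Or.inl (by exact_mod_cast ht)
  have e1 : HasDerivAt (fun w : ℂ => -w - z * w⁻¹)
      (-1 - z * -(((t : ℂ) ^ 2)⁻¹)) (t : ℂ) :=
    (hasDerivAt_id _).neg.sub ((hasDerivAt_inv hT).const_mul z)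
  have e2 := e1.cexp
  have e3 : HasDerivAt (fun w : ℂ => w ^ (-α)) (-(α * (t : ℂ) ^ (-α - 1))) (t : ℂ) := by
    simpa using (hasDerivAt_id ((t : ℂ))).cpow_const (c := -α) hslit
  have e5 := (e2.mul e3).comp_ofReal
  have hfun : (fun s : ℝ => Complex.exp (-(s : ℂ) - z / (s : ℂ)) * (s : ℂ) ^ (-α))
      = (fun y : ℝ => Complex.exp (-(y : ℂ) - z * ((y : ℂ))⁻¹) * ((y : ℂ)) ^ (-α)) := by
    funext s; rw [div_eq_mul_inv]
  rw [hfun]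
  convert e5 using 1
  · rfl
  have k2 : (t : ℂ) ^ (-α - 2) = (t : ℂ) ^ (-α) * (((t : ℂ)) ^ 2)⁻¹ := by
    rw [show -α - 2 = -α + (-2 : ℂ) by ring, Complex.cpow_add _ _ hT]
    congr 1
    rw [show (-2 : ℂ) = -((2 : ℕ) : ℂ) by norm_num, Complex.cpow_neg, Complex.cpow_natCast]
  rw [k2, div_eq_mul_inv]
  ring

/-- For `Re z > 0`, `w ↦ ∫₀^∞ e^{-t-w/t} t^{-α-1} dt` is complex
differentiable at `z` with derivative `−∫₀^∞ e^{-t-z/t} t^{-α-2} dt`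
(i.e. `∂_z U_α = −U_{α+1}`), and `(z∂_z + α)U_α(z) = −U_{α-1}(z)`. -/
theorem stmt_9 (α z : ℂ) (hz : 0 < z.re) :
    HasDerivAt
      (fun w : ℂ => ∫ t in Set.Ioi (0 : ℝ),
        Complex.exp (-(t : ℂ) - w / (t : ℂ)) * (t : ℂ) ^ (-α - 1))
      (-∫ t in Set.Ioi (0 : ℝ),
        Complex.exp (-(t : ℂ) - z / (t : ℂ)) * (t : ℂ) ^ (-α - 2)) z ∧
    z * (-∫ t in Set.Ioi (0 : ℝ),
          Complex.exp (-(t : ℂ) - z / (t : ℂ)) * (t : ℂ) ^ (-α - 2)) +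
        α * ∫ t in Set.Ioi (0 : ℝ),
          Complex.exp (-(t : ℂ) - z / (t : ℂ)) * (t : ℂ) ^ (-α - 1)
      = -∫ t in Set.Ioi (0 : ℝ),
          Complex.exp (-(t : ℂ) - z / (t : ℂ)) * (t : ℂ) ^ (-α) := by
  constructor
  · -- differentiation under the integral sign
    have hε : (0 : ℝ) < z.re / 2 := half_pos hz
    have main := hasDerivAt_integral_of_dominated_loc_of_deriv_le
      (F := fun w : ℂ => fun t : ℝ =>
        Complex.exp (-(t : ℂ) - w / (t : ℂ)) * (t : ℂ) ^ (-α - 1))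
      (F' := fun w : ℂ => fun t : ℝ =>
        -(Complex.exp (-(t : ℂ) - w / (t : ℂ)) * (t : ℂ) ^ (-α - 2)))
      (μ := volume.restrict (Ioi (0 : ℝ))) (x₀ := z)
      (bound := fun t : ℝ => Real.exp (-t - (z.re / 2) / t) * t ^ ((-α - 2).re))
      (Metric.ball_mem_nhds z hε)
      (Eventually.of_forall fun w =>
        (stmt9_cont w (-α - 1)).aestronglyMeasurable measurableSet_Ioi)
      (stmt9_int z (-α - 1) hz)
      (((stmt9_cont z (-α - 2)).aestronglyMeasurable measurableSet_Ioi).neg)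
      ?_ (stmt9_int_real (z.re / 2) ((-α - 2).re) hε) ?_
    · rw [integral_neg] at main
      exact main.2
    · -- bound
      filter_upwards [ae_restrict_mem measurableSet_Ioi] with t ht w hw
      have ht0 : (0 : ℝ) < t := ht
      rw [norm_neg, stmt9_norm w (-α - 2) ht0]
      apply mul_le_mul_of_nonneg_right _ (Real.rpow_nonneg ht0.le _)
      apply Real.exp_le_exp.2
      have hwre : z.re / 2 ≤ w.re := by
        have h1 : |(w - z).re| ≤ ‖w - z‖ := Complex.abs_re_le_norm _
        have h2 : ‖w - z‖ < z.re / 2 := by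
          rw [Metric.mem_ball, Complex.dist_eq] at hw; exact hw
        have : |w.re - z.re| < z.re / 2 := by
          simpa using lt_of_le_of_lt h1 h2
        have := abs_lt.1 this
        linarith [this.1]
      have hd : (z.re / 2) / t ≤ w.re / t := by gcongr
      linarith
    · -- differentiability in w
      filter_upwards [ae_restrict_mem measurableSet_Ioi] with t ht w hw
      have ht0 : (0 : ℝ) < t := ht
      have hT : (t : ℂ) ≠ 0 := by exact_mod_cast ht0.ne'
      have d1 : HasDerivAt (fun w : ℂ => -(t : ℂ) - w / (t : ℂ)) (-((t : ℂ))⁻¹) w := by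
        simpa [one_div] using ((hasDerivAt_id w).div_const ((t : ℂ))).const_sub (-(t : ℂ))
      have d2 := d1.cexp.mul_const ((t : ℂ) ^ (-α - 1))
      convert d2 using 1
      · rfl
      rw [show -α - 2 = (-α - 1) + (-1 : ℂ) by ring, Complex.cpow_add _ _ hT,
        Complex.cpow_neg_one]
      ring
  · -- integration by parts identity
    set G : ℝ → ℂ := fun t =>
      -(Complex.exp (-(t : ℂ) - z / (t : ℂ)) * (t : ℂ) ^ (-α))
        + (z * (Complex.exp (-(t : ℂ) - z / (t : ℂ)) * (t : ℂ) ^ (-α - 2))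
          - α * (Complex.exp (-(t : ℂ) - z / (t : ℂ)) * (t : ℂ) ^ (-α - 1))) with hG
    have hGint : IntegrableOn G (Ioi (0 : ℝ)) :=
      ((stmt9_int z (-α) hz).neg).add
        (((stmt9_int z (-α - 2) hz).const_mul z).sub
          ((stmt9_int z (-α - 1) hz).const_mul α))
    have hg : ∀ x ∈ Ioi (0 : ℝ), HasDerivAt
        (fun t : ℝ => Complex.exp (-(t : ℂ) - z / (t : ℂ)) * (t : ℂ) ^ (-α)) (G x) x :=
      fun x hx => stmt9_deriv_t z α hx
    have hsplit : ∫ t in Ioi (0 : ℝ), G t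
        = (∫ t in Ioc (0 : ℝ) 1, G t) + ∫ t in Ioi (1 : ℝ), G t := by
      rw [← setIntegral_union (Set.Ioc_disjoint_Ioi le_rfl) measurableSet_Ioi
        (hGint.mono_set Set.Ioc_subset_Ioi_self)
        (hGint.mono_set (Set.Ioi_subset_Ioi zero_le_one)),
        Set.Ioc_union_Ioi_eq_Ioi zero_le_one]
    have h01 : ∫ t in Ioc (0 : ℝ) 1, G t = Complex.exp (-(1 : ℂ) - z / (1 : ℂ)) * (1 : ℂ) ^ (-α) - 0 := by
      rw [← intervalIntegral.integral_of_le zero_le_one]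
      refine intervalIntegral.integral_eq_sub_of_hasDerivAt_of_tendsto zero_lt_one
        (fun x hx => hg x hx.1) ?_ (stmt9_bot z (-α) hz) ?_
      · rw [intervalIntegrable_iff_integrableOn_Ioc_of_le zero_le_one]
        exact hGint.mono_set Set.Ioc_subset_Ioi_self
      · exact (hg 1 (Set.mem_Ioi.2 one_pos)).continuousAt.continuousWithinAt
    have h1top : ∫ t in Ioi (1 : ℝ), G t = 0 - Complex.exp (-(1 : ℂ) - z / (1 : ℂ)) * (1 : ℂ) ^ (-α) :=
      integral_Ioi_of_hasDerivAt_of_tendsto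
        (hg 1 (Set.mem_Ioi.2 one_pos)).continuousAt.continuousWithinAt
        (fun x hx => hg x (Set.mem_Ioi.2 (lt_trans zero_lt_one hx)))
        (hGint.mono_set (Set.Ioi_subset_Ioi zero_le_one))
        (stmt9_top z (-α) hz)
    have key : ∫ t in Ioi (0 : ℝ), G t = 0 := by
      rw [hsplit, h01, h1top]; ring
    have key2 :
        -(∫ t in Ioi (0 : ℝ), Complex.exp (-(t : ℂ) - z / (t : ℂ)) * (t : ℂ) ^ (-α))
          + (z * (∫ t in Ioi (0 : ℝ),
              Complex.exp (-(t : ℂ) - z / (t : ℂ)) * (t : ℂ) ^ (-α - 2))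
            - α * ∫ t in Ioi (0 : ℝ),
              Complex.exp (-(t : ℂ) - z / (t : ℂ)) * (t : ℂ) ^ (-α - 1)) = 0 := by
      have hA : Integrable (fun t : ℝ =>
          -(Complex.exp (-(t : ℂ) - z / (t : ℂ)) * (t : ℂ) ^ (-α)))
          (volume.restrict (Ioi (0 : ℝ))) := (stmt9_int z (-α) hz).neg
      have hC : Integrable (fun t : ℝ =>
          z * (Complex.exp (-(t : ℂ) - z / (t : ℂ)) * (t : ℂ) ^ (-α - 2)))
          (volume.restrict (Ioi (0 : ℝ))) := (stmt9_int z (-α - 2) hz).const_mul z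
      have hD : Integrable (fun t : ℝ =>
          α * (Complex.exp (-(t : ℂ) - z / (t : ℂ)) * (t : ℂ) ^ (-α - 1)))
          (volume.restrict (Ioi (0 : ℝ))) := (stmt9_int z (-α - 1) hz).const_mul α
      have hB : Integrable (fun t : ℝ =>
          z * (Complex.exp (-(t : ℂ) - z / (t : ℂ)) * (t : ℂ) ^ (-α - 2))
            - α * (Complex.exp (-(t : ℂ) - z / (t : ℂ)) * (t : ℂ) ^ (-α - 1)))
          (volume.restrict (Ioi (0 : ℝ))) := hC.sub hD
      rw [← integral_neg, ← integral_const_mul, ← integral_const_mul,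
        ← integral_sub hC hD, ← integral_add hA hB]
      simpa only [hG] using key
    linear_combination (-1 : ℂ) * key2
end

section
/- For every integer m ∈ ℤ and every z ∈ ℂ with z ≠ 0, 𝐅_m(z) = z^{-m} 𝐅_{-m}(z), i.e. ∑_{n=0}^∞ z^n/(Γ(m+1+n)·n!) = z^{-m} ∑_{n=0}^∞ z^n/(Γ(-m+1+n)·n!). -/
open Complex

lemma key_aux (m : ℕ) (z : ℂ) :
    (∑' n : ℕ, z ^ n / (Complex.Gamma (-(m : ℂ) + 1 + (n : ℂ)) * (n.factorial : ℂ)))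
      = z ^ m *
        ∑' n : ℕ, z ^ n / (Complex.Gamma ((m : ℂ) + 1 + (n : ℂ)) * (n.factorial : ℂ)) := by
  set f : ℕ → ℂ := fun n => z ^ n / (Complex.Gamma (-(m : ℂ) + 1 + (n : ℂ)) * (n.factorial : ℂ))
  have hinj : Function.Injective (fun k : ℕ => m + k) := add_right_injective m
  have hsupp : Function.support f ⊆ Set.range (fun k : ℕ => m + k) := by
    intro n hn
    by_contra hcon
    have hlt : n < m := by
      by_contra h
      exact hcon ⟨n - m, show m + (n - m) = n by omega⟩
    apply hn
    have : -(m : ℂ) + 1 + (n : ℂ) = -((m - 1 - n : ℕ) : ℂ) := by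
      push_cast [Nat.cast_sub (by omega : n ≤ m - 1), Nat.cast_sub (by omega : 1 ≤ m)]
      ring
    simp [f, this, Complex.Gamma_neg_nat_eq_zero]
  have h1 : ∑' k : ℕ, f (m + k) = ∑' n : ℕ, f n := hinj.tsum_eq hsupp
  have h2 : ∀ k : ℕ, f (m + k)
      = z ^ m * (z ^ k / (Complex.Gamma ((m : ℂ) + 1 + (k : ℂ)) * (k.factorial : ℂ))) := by
    intro k
    have hg1 : -(m : ℂ) + 1 + ((m + k : ℕ) : ℂ) = (k : ℂ) + 1 := by push_cast; ring
    have hg2 : (m : ℂ) + 1 + (k : ℂ) = ((m + k : ℕ) : ℂ) + 1 := by push_cast; ring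
    simp only [f, hg1, hg2, Complex.Gamma_nat_eq_factorial, pow_add]
    field_simp
  rw [← h1]
  simp_rw [h2]
  exact tsum_mul_left

/-- For every `m ∈ ℤ` and `z ≠ 0`, `𝐅_m(z) = z^{-m} 𝐅_{-m}(z)`, i.e.
`∑_{n} z^n/(Γ(m+1+n)·n!) = z^{-m} ∑_{n} z^n/(Γ(-m+1+n)·n!)`. (Mathlib's
`Complex.Gamma` vanishes at nonpositive integers, implementing `1/Γ = 0` there.) -/
theorem stmt_11 (m : ℤ) (z : ℂ) (hz : z ≠ 0) :
    (∑' n : ℕ, z ^ n / (Complex.Gamma ((m : ℂ) + 1 + (n : ℂ)) * (n.factorial : ℂ)))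
      = z ^ (-m) *
        ∑' n : ℕ, z ^ n / (Complex.Gamma (-(m : ℂ) + 1 + (n : ℂ)) * (n.factorial : ℂ)) := by
  obtain ⟨k, rfl | rfl⟩ := Int.eq_nat_or_neg m
  · push_cast
    rw [key_aux k z, ← mul_assoc, zpow_neg, zpow_natCast, inv_mul_cancel₀ (pow_ne_zero _ hz),
      one_mul]
  · push_cast
    rw [neg_neg, key_aux k z]
    simp [zpow_natCast]
end

section
/- For every t ∈ ℂ with t ≠ 0 and every z ∈ ℂ, the two-sided series ∑_{m ∈ ℤ} t^m 𝐅_m(z) converges absolutely and e^{t + z/t} = ∑_{m ∈ ℤ} t^m 𝐅_m(z). -/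
open Complex

/-- The Olver-normalized ₀F₁ hypergeometric function
`𝐅_α(z) = ∑_{j=0}^∞ z^j/(Γ(α+1+j)·j!)`. (Mathlib's `Complex.Gamma` vanishes at the
nonpositive integers, so division by it implements the convention `1/Γ = 0` there.) -/
noncomputable def FOlver (α z : ℂ) : ℂ :=
  ∑' j : ℕ, z ^ j / (Complex.Gamma (α + 1 + (j : ℂ)) * (j.factorial : ℂ))

/-- The double-series term `t^k/k! · (z/t)^n/n!`. -/
noncomputable def genTerm (t z : ℂ) (p : ℕ × ℕ) : ℂ :=
  (t ^ p.1 / (p.1.factorial : ℂ)) * ((z / t) ^ p.2 / (p.2.factorial : ℂ))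

lemma genTerm_norm_summable (t z : ℂ) : Summable (fun p : ℕ × ℕ => ‖genTerm t z p‖) := by
  have h1 : Summable (fun n : ℕ => ‖t ^ n / (n.factorial : ℂ)‖) := by
    simpa [norm_div, norm_pow, Complex.norm_natCast] using
      Real.summable_pow_div_factorial ‖t‖
  have h2 : Summable (fun n : ℕ => ‖(z / t) ^ n / (n.factorial : ℂ)‖) := by
    simpa [norm_div, norm_pow, Complex.norm_natCast] using
      Real.summable_pow_div_factorial ‖z / t‖
  simpa [genTerm, norm_mul] using h1.mul_of_nonneg h2 (fun n => norm_nonneg _)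
    (fun n => norm_nonneg _)

lemma genTerm_tsum (t z : ℂ) :
    ∑' p : ℕ × ℕ, genTerm t z p = Complex.exp (t + z / t) := by
  have h1 : Summable (fun n : ℕ => ‖t ^ n / (n.factorial : ℂ)‖) := by
    simpa [norm_div, norm_pow, Complex.norm_natCast] using
      Real.summable_pow_div_factorial ‖t‖
  have h2 : Summable (fun n : ℕ => ‖(z / t) ^ n / (n.factorial : ℂ)‖) := by
    simpa [norm_div, norm_pow, Complex.norm_natCast] using
      Real.summable_pow_div_factorial ‖z / t‖
  have hexp : ∀ w : ℂ, Complex.exp w = ∑' n : ℕ, w ^ n / (n.factorial : ℂ) := by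
    intro w
    rw [Complex.exp_eq_exp_ℂ, NormedSpace.exp_eq_tsum_div]
  rw [Complex.exp_add, hexp, hexp]
  exact (tsum_mul_tsum_of_summable_norm h1 h2).symm

/-- Pointwise: on the fiber, the term equals `t^m · z^j/(Γ(m+1+j)·j!)`. -/
lemma genTerm_eq (t : ℂ) (ht : t ≠ 0) (z : ℂ) (m : ℤ) (j : ℕ) (hj : 0 ≤ m + j) :
    genTerm t z ((m + j).toNat, j)
      = t ^ m * (z ^ j / (Complex.Gamma ((m : ℂ) + 1 + (j : ℂ)) * (j.factorial : ℂ))) := by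
  set k : ℕ := (m + j).toNat with hk
  have hkz : (k : ℤ) = m + j := Int.toNat_of_nonneg hj
  have hkc : ((k : ℕ) : ℂ) = (m : ℂ) + (j : ℂ) := by
    have := congrArg (fun x : ℤ => (x : ℂ)) hkz
    push_cast at this
    exact this
  have hG : Complex.Gamma ((m : ℂ) + 1 + (j : ℂ)) = (k.factorial : ℂ) := by
    have h : ((m : ℂ) + 1 + (j : ℂ)) = (k : ℂ) + 1 := by rw [hkc]; ring
    rw [h, Complex.Gamma_nat_eq_factorial]
  have htk : (t : ℂ) ^ (k : ℕ) = t ^ m * t ^ (j : ℕ) := by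
    rw [← zpow_natCast t k, hkz, zpow_add₀ ht, zpow_natCast]
  have htj : (t : ℂ) ^ (j : ℕ) ≠ 0 := pow_ne_zero _ ht
  have hkf : ((k.factorial : ℕ) : ℂ) ≠ 0 := Nat.cast_ne_zero.mpr k.factorial_ne_zero
  have hjf : ((j.factorial : ℕ) : ℂ) ≠ 0 := Nat.cast_ne_zero.mpr j.factorial_ne_zero
  rw [genTerm, hG]
  simp only
  rw [htk, div_pow]
  field_simp

/-- Terms of `FOlver m z` vanish when `m + j < 0`. -/
lemma FOlver_term_zero (z : ℂ) (m : ℤ) (j : ℕ) (hj : m + j < 0) :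
    z ^ j / (Complex.Gamma ((m : ℂ) + 1 + (j : ℂ)) * (j.factorial : ℂ)) = 0 := by
  have hG : Complex.Gamma ((m : ℂ) + 1 + (j : ℂ)) = 0 := by
    rw [Complex.Gamma_eq_zero_iff]
    refine ⟨(-(m + 1 + j)).toNat, ?_⟩
    have h : ((-(m + 1 + j)).toNat : ℤ) = -(m + 1 + j) := by omega
    have h2 : (((-(m + 1 + j)).toNat : ℤ) : ℂ) = ((-(m + 1 + j) : ℤ) : ℂ) := by rw [h]
    push_cast at h2
    linear_combination h2
  rw [hG, zero_mul, div_zero]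

/-- the generating function: for `t ≠ 0` and any `z`, the two-sided
series `∑_{m ∈ ℤ} t^m 𝐅_m(z)` converges absolutely and
`e^{t + z/t} = ∑_{m ∈ ℤ} t^m 𝐅_m(z)`. -/
theorem stmt_12 (t : ℂ) (ht : t ≠ 0) (z : ℂ) :
    Summable (fun m : ℤ => ‖t ^ m * FOlver (m : ℂ) z‖) ∧
    Complex.exp (t + z / t) = ∑' m : ℤ, t ^ m * FOlver (m : ℂ) z := by
  classical
  have hfn := genTerm_norm_summable t z
  have hfs : Summable (genTerm t z) := hfn.of_norm
  set g : ℕ × ℕ → ℤ := fun p => (p.1 : ℤ) - p.2 with hg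
  -- fiber sums equal t^m * FOlver m z
  have hfiber : ∀ m : ℤ,
      ∑' p : (g ⁻¹' {m} : Set (ℕ × ℕ)), genTerm t z p = t ^ m * FOlver (m : ℂ) z := by
    intro m
    rw [FOlver, ← tsum_mul_left]
    refine tsum_eq_tsum_of_ne_zero_bij
      (fun j => ⟨((m + (j : ℕ)).toNat, (j : ℕ)), ?_⟩) ?_ ?_ ?_
    · -- membership in fiber
      rcases j with ⟨j, hj⟩
      have hj0 : 0 ≤ m + j := by
        by_contra hcon
        push_neg at hcon
        exact hj (by simp only [FOlver_term_zero z m j hcon, mul_zero])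
      simp only [Set.mem_preimage, Set.mem_singleton_iff, hg]
      omega
    · -- injective
      rintro ⟨j1, h1⟩ ⟨j2, h2⟩ h
      simp only [Subtype.mk_eq_mk, Prod.mk.injEq] at h
      exact Subtype.ext h.2
    · -- support ⊆ range
      rintro ⟨⟨k, n⟩, hkn⟩ hne
      have hkn' : (k : ℤ) - n = m := by
        simpa [hg, Set.mem_preimage, Set.mem_singleton_iff] using hkn
      have hj0 : 0 ≤ m + n := by omega
      have hk : k = (m + n).toNat := by omega
      have hval : genTerm t z (k, n)
          = t ^ m * (z ^ n / (Complex.Gamma ((m : ℂ) + 1 + (n : ℂ)) * (n.factorial : ℂ))) := by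
        rw [hk]; exact genTerm_eq t ht z m n hj0
      have hn0 : t ^ m * (z ^ n / (Complex.Gamma ((m : ℂ) + 1 + (n : ℂ))
          * (n.factorial : ℂ))) ≠ 0 := by
        rw [← hval]
        simpa using hne
      refine ⟨⟨n, hn0⟩, ?_⟩
      apply Subtype.ext
      simp [hk]
    · -- values agree
      rintro ⟨j, hj⟩
      have hj0 : 0 ≤ m + j := by
        by_contra hcon
        push_neg at hcon
        exact hj (by simp only [FOlver_term_zero z m j hcon, mul_zero])
      exact genTerm_eq t ht z m j hj0
  have hsum : HasSum (fun m : ℤ => t ^ m * FOlver (m : ℂ) z) (Complex.exp (t + z / t)) := by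
    have h := (hfs.hasSum).tsum_fiberwise g
    rw [genTerm_tsum t z] at h
    exact (funext hfiber) ▸ h
  constructor
  · -- absolute convergence
    have hnormsum : Summable (fun m : ℤ => ∑' p : (g ⁻¹' {m} : Set (ℕ × ℕ)), ‖genTerm t z p‖) :=
      ((hfn.hasSum).tsum_fiberwise g).summable
    refine hnormsum.of_nonneg_of_le (fun m => norm_nonneg _) (fun m => ?_)
    rw [← hfiber m]
    exact norm_tsum_le_tsum_norm (hfn.subtype _)
  · exact hsum.tsum_eq.symm
end

section
/- Let α ∈ ℂ be such that neither α+1 nor 2α+1 is a nonpositive integer, and let z ∈ ℂ with z ∉ (−∞,0). Then, for either choice of sign, ∑_{j=0}^∞ z^j/((α+1)_j · j!) = e^{∓2√z} ∑_{n=0}^∞ (α+1/2)_n (±4√z)^n / ((2α+1)_n · n!), where √z is the principal square root and both series converge absolutely (Kummer's second transformation: F_α(z) = e^{∓2√z} ₁F₁(α+1/2; 2α+1; ±4√z)). -/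
open Complex Finset

noncomputable def Pc (a : ℂ) (n : ℕ) : ℂ := (ascPochhammer ℂ n).eval a

lemma Pc_zero (a : ℂ) : Pc a 0 = 1 := by simp [Pc]

lemma Pc_succ (a : ℂ) (n : ℕ) : Pc a (n+1) = Pc a n * (a + n) :=
  ascPochhammer_succ_eval n a

lemma Pc_add (a : ℂ) (n m : ℕ) : Pc a (n + m) = Pc a n * Pc (a + n) m := by
  have h := ascPochhammer_mul ℂ n m
  have := congrArg (Polynomial.eval a) h
  rw [Polynomial.eval_mul, Polynomial.eval_comp] at this
  simpa [Pc] using this.symm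

lemma Pc_ne_zero {a : ℂ} (h : ∀ k : ℕ, a ≠ -(k:ℂ)) (n : ℕ) : Pc a n ≠ 0 := by
  induction n with
  | zero => simp [Pc_zero]
  | succ n ih =>
    rw [Pc_succ]
    refine mul_ne_zero ih ?_
    intro hc
    exact h n (eq_neg_of_add_eq_zero_left hc)

noncomputable def Ac (a : ℂ) (k : ℕ) : ℂ := Pc a k / (k.factorial : ℂ)

lemma Ac_zero (a : ℂ) : Ac a 0 = 1 := by simp [Ac, Pc_zero]

lemma fact_ne_zero' (k : ℕ) : ((k.factorial : ℂ)) ≠ 0 := by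
  exact_mod_cast Nat.cast_ne_zero.mpr (Nat.factorial_ne_zero k)

lemma Ac_succ (a : ℂ) (k : ℕ) : ((k:ℂ)+1) * Ac a (k+1) = (a + k) * Ac a k := by
  have h1 := fact_ne_zero' k
  have h2 : ((k:ℂ)+1) ≠ 0 := Nat.cast_add_one_ne_zero k
  rw [Ac, Ac, Pc_succ, Nat.factorial_succ]
  push_cast
  field_simp

noncomputable def fc (a : ℂ) (N : ℕ) : ℂ :=
  ∑ k ∈ Finset.range (N+1), (-1)^k * Ac a k * Ac a (N - k)

lemma step1 (a : ℂ) (N : ℕ) :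
    ((N:ℂ)+1) * fc a (N+1)
      = ∑ k ∈ Finset.range (N+1), (-1)^k * (((N-k : ℕ):ℂ) - k) * Ac a k * Ac a (N-k) := by
  rw [fc, Finset.mul_sum]
  have e1 : ∀ k ∈ Finset.range (N+2),
      ((N:ℂ)+1) * ((-1)^k * Ac a k * Ac a (N+1-k))
        = (k:ℂ) * ((-1)^k * Ac a k * Ac a (N+1-k))
          + (-1)^k * Ac a k * (((N+1-k : ℕ):ℂ) * Ac a (N+1-k)) := by
    intro k hk
    have hk' : k ≤ N+1 := Nat.lt_succ_iff.mp (Finset.mem_range.mp hk)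
    have hc : ((N+1-k : ℕ):ℂ) = ((N:ℂ)+1) - (k:ℂ) := by
      push_cast [Nat.cast_sub hk']; ring
    rw [hc]; ring
  rw [Finset.sum_congr rfl e1, Finset.sum_add_distrib]
  have e2 : ∑ k ∈ Finset.range (N+2), (k:ℂ) * ((-1)^k * Ac a k * Ac a (N+1-k))
      = ∑ j ∈ Finset.range (N+1), -((-1)^j * ((a+(j:ℂ)) * Ac a j) * Ac a (N-j)) := by
    rw [Finset.sum_range_succ']
    simp only [Nat.cast_zero, zero_mul, add_zero]
    refine Finset.sum_congr rfl ?_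
    intro j _
    have h1 : N + 1 - (j+1) = N - j := by omega
    have h2 : ((j:ℂ)+1) * Ac a (j+1) = (a + j) * Ac a j := Ac_succ a j
    rw [h1]
    push_cast
    linear_combination ((-1)^(j+1) * Ac a (N-j)) * h2
  have e3 : ∑ k ∈ Finset.range (N+2), (-1)^k * Ac a k * (((N+1-k : ℕ):ℂ) * Ac a (N+1-k))
      = ∑ k ∈ Finset.range (N+1), (-1)^k * Ac a k * ((a + ((N-k : ℕ):ℂ)) * Ac a (N-k)) := by
    rw [Finset.sum_range_succ]
    simp only [Nat.sub_self, Nat.cast_zero, zero_mul, mul_zero, add_zero]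
    refine Finset.sum_congr rfl ?_
    intro k hk
    have hk' : k ≤ N := Nat.lt_succ_iff.mp (Finset.mem_range.mp hk)
    have h1 : N + 1 - k = (N - k) + 1 := by omega
    have h2 : (((N-k:ℕ):ℂ)+1) * Ac a ((N-k)+1) = (a + ((N-k:ℕ):ℂ)) * Ac a (N-k) :=
      Ac_succ a (N-k)
    rw [h1]
    push_cast
    linear_combination ((-1)^k * Ac a k) * h2
  rw [e2, e3, ← Finset.sum_add_distrib]
  refine Finset.sum_congr rfl ?_
  intro k _
  ring

lemma step2 (a : ℂ) (N : ℕ) :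
    ∑ k ∈ Finset.range (N+2), (-1)^k * (((N+1-k : ℕ):ℂ) - k) * Ac a k * Ac a (N+1-k)
      = (2*a + N) * fc a N := by
  have esplit : ∀ k ∈ Finset.range (N+2),
      (-1)^k * (((N+1-k : ℕ):ℂ) - k) * Ac a k * Ac a (N+1-k)
        = (-1)^k * Ac a k * (((N+1-k : ℕ):ℂ) * Ac a (N+1-k))
          - (k:ℂ) * ((-1)^k * Ac a k * Ac a (N+1-k)) := by
    intro k _
    ring
  rw [Finset.sum_congr rfl esplit, Finset.sum_sub_distrib]
  have e3 : ∑ k ∈ Finset.range (N+2), (-1)^k * Ac a k * (((N+1-k : ℕ):ℂ) * Ac a (N+1-k))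
      = ∑ k ∈ Finset.range (N+1), (-1)^k * Ac a k * ((a + ((N-k : ℕ):ℂ)) * Ac a (N-k)) := by
    rw [Finset.sum_range_succ]
    simp only [Nat.sub_self, Nat.cast_zero, zero_mul, mul_zero, add_zero]
    refine Finset.sum_congr rfl ?_
    intro k hk
    have hk' : k ≤ N := Nat.lt_succ_iff.mp (Finset.mem_range.mp hk)
    have h1 : N + 1 - k = (N - k) + 1 := by omega
    have h2 : (((N-k:ℕ):ℂ)+1) * Ac a ((N-k)+1) = (a + ((N-k:ℕ):ℂ)) * Ac a (N-k) :=
      Ac_succ a (N-k)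
    rw [h1]
    push_cast
    linear_combination ((-1)^k * Ac a k) * h2
  have e2 : ∑ k ∈ Finset.range (N+2), (k:ℂ) * ((-1)^k * Ac a k * Ac a (N+1-k))
      = ∑ j ∈ Finset.range (N+1), -((-1)^j * ((a+(j:ℂ)) * Ac a j) * Ac a (N-j)) := by
    rw [Finset.sum_range_succ']
    simp only [Nat.cast_zero, zero_mul, add_zero]
    refine Finset.sum_congr rfl ?_
    intro j _
    have h1 : N + 1 - (j+1) = N - j := by omega
    have h2 : ((j:ℂ)+1) * Ac a (j+1) = (a + j) * Ac a j := Ac_succ a j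
    rw [h1]
    push_cast
    linear_combination ((-1)^(j+1) * Ac a (N-j)) * h2
  rw [e3, e2, fc, Finset.mul_sum, ← Finset.sum_sub_distrib]
  refine Finset.sum_congr rfl ?_
  intro k hk
  have hk' : k ≤ N := Nat.lt_succ_iff.mp (Finset.mem_range.mp hk)
  have hc : ((N-k : ℕ):ℂ) = (N:ℂ) - (k:ℂ) := by
    push_cast [Nat.cast_sub hk']; ring
  rw [hc]
  ring

lemma frec (a : ℂ) (N : ℕ) :
    ((N:ℂ)+2) * fc a (N+2) = (2*a + N) * fc a N := by
  have h1 := step1 a (N+1)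
  have h2 := step2 a N
  have hcast : (((N+1:ℕ)):ℂ) + 1 = (N:ℂ) + 2 := by push_cast; ring
  rw [hcast] at h1
  rw [h1, ← h2]

lemma fc_zero (a : ℂ) : fc a 0 = 1 := by
  simp [fc, Ac_zero]

lemma fc_one (a : ℂ) : fc a 1 = 0 := by
  simp [fc, Finset.sum_range_succ, Ac_zero]

lemma fc_even_odd (a : ℂ) : ∀ j : ℕ, fc a (2*j) = Ac a j ∧ fc a (2*j+1) = 0 := by
  intro j
  induction j with
  | zero =>
    constructor
    · norm_num [fc_zero, Ac_zero]
    · norm_num [fc_one]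
  | succ j ih =>
    obtain ⟨ihe, iho⟩ := ih
    have hne : ((2*j:ℕ):ℂ) + 2 ≠ 0 := by
      have : ((2*j:ℕ):ℂ) + 2 = ((2*j+2 : ℕ):ℂ) := by push_cast; ring
      rw [this]
      exact Nat.cast_ne_zero.mpr (by omega)
    constructor
    · have h := frec a (2*j)
      have e : 2*(j+1) = 2*j+2 := by ring
      rw [e]
      apply mul_left_cancel₀ hne
      rw [h, ihe]
      have h2 := Ac_succ a j
      push_cast
      push_cast at h2
      linear_combination (-2 : ℂ) * h2
    · have h := frec a (2*j+1)
      have hne' : (((2*j+1:ℕ)):ℂ) + 2 ≠ 0 := by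
        have : (((2*j+1:ℕ)):ℂ) + 2 = ((2*j+3 : ℕ):ℂ) := by push_cast; ring
        rw [this]
        exact Nat.cast_ne_zero.mpr (by omega)
      have e : 2*(j+1)+1 = (2*j+1)+2 := by ring
      rw [e]
      rw [iho, mul_zero] at h
      exact (mul_eq_zero.mp h).resolve_left hne'

lemma dVdm (x y : ℂ) : ∀ m : ℕ, ∑ k ∈ Finset.range (m+1), Ac x k * Ac y (m-k) = Ac (x+y) m := by
  intro m
  induction m with
  | zero => simp [Ac_zero]
  | succ m ih =>
    have hne : ((m:ℂ)+1) ≠ 0 := Nat.cast_add_one_ne_zero m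
    apply mul_left_cancel₀ hne
    rw [Finset.mul_sum]
    have e1 : ∀ k ∈ Finset.range (m+2),
        ((m:ℂ)+1) * (Ac x k * Ac y (m+1-k))
          = (k:ℂ) * (Ac x k * Ac y (m+1-k))
            + Ac x k * (((m+1-k : ℕ):ℂ) * Ac y (m+1-k)) := by
      intro k hk
      have hk' : k ≤ m+1 := Nat.lt_succ_iff.mp (Finset.mem_range.mp hk)
      have hc : ((m+1-k : ℕ):ℂ) = ((m:ℂ)+1) - (k:ℂ) := by
        push_cast [Nat.cast_sub hk']; ring
      rw [hc]; ring
    rw [Finset.sum_congr rfl e1, Finset.sum_add_distrib]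
    have e2 : ∑ k ∈ Finset.range (m+2), (k:ℂ) * (Ac x k * Ac y (m+1-k))
        = ∑ j ∈ Finset.range (m+1), ((x+(j:ℂ)) * Ac x j) * Ac y (m-j) := by
      rw [Finset.sum_range_succ']
      simp only [Nat.cast_zero, zero_mul, add_zero]
      refine Finset.sum_congr rfl ?_
      intro j _
      have h1 : m + 1 - (j+1) = m - j := by omega
      have h2 : ((j:ℂ)+1) * Ac x (j+1) = (x + j) * Ac x j := Ac_succ x j
      rw [h1]
      push_cast
      linear_combination (Ac y (m-j)) * h2
    have e3 : ∑ k ∈ Finset.range (m+2), Ac x k * (((m+1-k : ℕ):ℂ) * Ac y (m+1-k))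
        = ∑ k ∈ Finset.range (m+1), Ac x k * ((y + ((m-k:ℕ):ℂ)) * Ac y (m-k)) := by
      rw [Finset.sum_range_succ]
      simp only [Nat.sub_self, Nat.cast_zero, zero_mul, mul_zero, add_zero]
      refine Finset.sum_congr rfl ?_
      intro k hk
      have hk' : k ≤ m := Nat.lt_succ_iff.mp (Finset.mem_range.mp hk)
      have h1 : m + 1 - k = (m - k) + 1 := by omega
      have h2 : (((m-k:ℕ):ℂ)+1) * Ac y ((m-k)+1) = (y + ((m-k:ℕ):ℂ)) * Ac y (m-k) :=
        Ac_succ y (m-k)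
      rw [h1]
      push_cast
      linear_combination (Ac x k) * h2
    rw [e2, e3, ← Finset.sum_add_distrib]
    have e4 : ∑ k ∈ Finset.range (m+1),
        (((x+(k:ℂ)) * Ac x k) * Ac y (m-k) + Ac x k * ((y + ((m-k:ℕ):ℂ)) * Ac y (m-k)))
          = (x + y + m) * ∑ k ∈ Finset.range (m+1), Ac x k * Ac y (m-k) := by
      rw [Finset.mul_sum]
      refine Finset.sum_congr rfl ?_
      intro k hk
      have hk' : k ≤ m := Nat.lt_succ_iff.mp (Finset.mem_range.mp hk)
      have hc : ((m-k : ℕ):ℂ) = (m:ℂ) - (k:ℂ) := by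
        push_cast [Nat.cast_sub hk']; ring
      rw [hc]; ring
    rw [e4, ih]
    have h2 := Ac_succ (x+y) m
    linear_combination -h2

lemma Pc_dup (a : ℂ) : ∀ j : ℕ, Pc (2*a) (2*j) = 4^j * Pc a j * Pc (a + 1/2) j := by
  intro j
  induction j with
  | zero => simp [Pc_zero]
  | succ j ih =>
    have e : 2*(j+1) = (2*j+1)+1 := by ring
    rw [e, Pc_succ, Pc_succ, ih, Pc_succ a j, Pc_succ (a+1/2) j]
    push_cast
    ring

lemma tri_ext (M n : ℕ) (g : ℕ → ℂ) :
    ∑ k ∈ Finset.range (M+1), (if n + k ≤ M then g k else 0)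
      = ∑ k ∈ Finset.range (M+1-n), g k := by
  rw [← Finset.sum_subset (Finset.range_subset_range.mpr (by omega : M+1-n ≤ M+1))
      (fun k hk1 hk2 => by
        have h1 := Finset.mem_range.mp hk1
        have h2 : ¬ k < M+1-n := fun h => hk2 (Finset.mem_range.mpr h)
        exact if_neg (by omega : ¬ n + k ≤ M))]
  refine Finset.sum_congr rfl fun k hk => ?_
  have := Finset.mem_range.mp hk
  exact if_pos (by omega)

lemma tri_swap (M : ℕ) (F : ℕ → ℕ → ℂ) :
    ∑ n ∈ Finset.range (M+1), ∑ k ∈ Finset.range (M+1-n), F n k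
      = ∑ k ∈ Finset.range (M+1), ∑ n ∈ Finset.range (M+1-k), F n k := by
  rw [Finset.sum_congr rfl (fun n _ => (tri_ext M n (fun k => F n k)).symm)]
  rw [Finset.sum_comm]
  refine Finset.sum_congr rfl fun k _ => ?_
  rw [← tri_ext M k (fun n => F n k)]
  exact Finset.sum_congr rfl fun n _ => by rw [Nat.add_comm k n]

lemma binom_sum (M : ℕ) :
    ∑ n ∈ Finset.range (M+1), (-2:ℂ)^(M-n) * 4^n / ((n.factorial : ℂ) * ((M-n).factorial : ℂ))
      = 2^M / (M.factorial : ℂ) := by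
  have h : ((2:ℂ))^M = ∑ n ∈ Finset.range (M+1), 4^n * (-2)^(M-n) * (M.choose n : ℂ) := by
    have h0 := add_pow (4:ℂ) (-2) M
    norm_num at h0
    exact h0
  rw [h, Finset.sum_div]
  refine Finset.sum_congr rfl fun n hn => ?_
  have hn' : n ≤ M := Nat.lt_succ_iff.mp (Finset.mem_range.mp hn)
  rw [Nat.cast_choose ℂ hn']
  have f1 := fact_ne_zero' n
  have f2 := fact_ne_zero' (M-n)
  have f3 := fact_ne_zero' M
  field_simp

lemma main_fin (a : ℂ) (N : ℕ) :
    ∑ n ∈ Finset.range (N+1),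
        (-2:ℂ)^(N-n) * 4^n * Ac a n * Ac (2*a + (n:ℂ)) (N-n)
      = 2^N * fc a N := by
  have e1 : ∀ n ∈ Finset.range (N+1),
      (-2:ℂ)^(N-n) * 4^n * Ac a n * Ac (2*a + (n:ℂ)) (N-n)
        = ∑ k ∈ Finset.range (N+1-n),
            (-2:ℂ)^(N-n) * 4^n * Ac a n * (Ac a k * Ac (a + (n:ℂ)) (N-n-k)) := by
    intro n hn
    have hn' : n ≤ N := Nat.lt_succ_iff.mp (Finset.mem_range.mp hn)
    have hx : (2*a + (n:ℂ)) = a + (a + (n:ℂ)) := by ring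
    rw [hx, ← dVdm a (a + (n:ℂ)) (N-n), Finset.mul_sum,
      (show N - n + 1 = N + 1 - n by omega)]
  rw [Finset.sum_congr rfl e1,
    tri_swap N (fun n k => (-2:ℂ)^(N-n) * 4^n * Ac a n * (Ac a k * Ac (a + (n:ℂ)) (N-n-k)))]
  have e2 : ∀ k ∈ Finset.range (N+1),
      (∑ n ∈ Finset.range (N+1-k),
        (-2:ℂ)^(N-n) * 4^n * Ac a n * (Ac a k * Ac (a + (n:ℂ)) (N-n-k)))
        = (-1)^k * 2^N * Ac a k * Ac a (N-k) := by
    intro k hk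
    have hk' : k ≤ N := Nat.lt_succ_iff.mp (Finset.mem_range.mp hk)
    have e3 : ∀ n ∈ Finset.range (N+1-k),
        (-2:ℂ)^(N-n) * 4^n * Ac a n * (Ac a k * Ac (a + (n:ℂ)) (N-n-k))
          = Ac a k * Pc a (N-k) * (-2)^k *
              ((-2:ℂ)^(N-k-n) * 4^n / ((n.factorial : ℂ) * ((N-k-n).factorial : ℂ))) := by
      intro n hn
      have hn' : n ≤ N - k := by have := Finset.mem_range.mp hn; omega
      have hidx : N - n - k = N - k - n := by omega
      have hm : n + (N - n - k) = N - k := by omega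
      have hPadd := Pc_add a n (N-n-k)
      rw [hm] at hPadd
      have hpow : (-2:ℂ)^(N-n) = (-2)^k * (-2)^(N-k-n) := by
        rw [← pow_add]; congr 1; omega
      rw [hidx] at hPadd ⊢
      rw [hpow, hPadd]
      simp only [Ac]
      have f1 := fact_ne_zero' n
      have f2 := fact_ne_zero' k
      have f3 := fact_ne_zero' (N-k-n)
      field_simp
    rw [Finset.sum_congr rfl e3, ← Finset.mul_sum,
      (show N + 1 - k = (N - k) + 1 by omega), binom_sum (N-k)]
    have h4 : (-2:ℂ)^k * 2^(N-k) = (-1)^k * 2^N := by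
      rw [neg_pow, mul_assoc, ← pow_add, (show k + (N-k) = N by omega)]
    show Ac a k * Pc a (N-k) * (-2)^k * (2^(N-k) / ((N-k).factorial : ℂ))
      = (-1)^k * 2^N * Ac a k * Ac a (N-k)
    rw [show Ac a (N-k) = Pc a (N-k) / ((N-k).factorial : ℂ) from rfl]
    have f2 := fact_ne_zero' (N-k)
    field_simp
    linear_combination (Ac a k * Pc a (N-k)) * h4
  rw [Finset.sum_congr rfl e2, fc, Finset.mul_sum]
  exact Finset.sum_congr rfl fun k _ => by ring

lemma norm_natCast_add_one (n : ℕ) : ‖(n:ℂ)+1‖ = (n:ℝ)+1 := by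
  have : ((n:ℂ)+1) = ((n+1:ℕ):ℂ) := by push_cast; ring
  rw [this, Complex.norm_natCast]
  push_cast; ring

lemma summable_F (b z : ℂ) (hb : ∀ k : ℕ, b ≠ -(k:ℂ)) :
    Summable (fun j : ℕ => ‖z ^ j / (Pc b j * ((j.factorial : ℕ) : ℂ))‖) := by
  apply summable_of_ratio_norm_eventually_le (r := 1/2) (by norm_num)
  have hP := Pc_ne_zero hb
  have key : ∀ j : ℕ, z ^ (j+1) / (Pc b (j+1) * (((j+1).factorial : ℕ) : ℂ))
      = (z ^ j / (Pc b j * ((j.factorial : ℕ) : ℂ))) * ((z / (b + j)) * (1/((j:ℂ)+1))) := by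
    intro j
    have d1 := hP j
    have d2 : (b + (j:ℂ)) ≠ 0 := fun hc => hb j (eq_neg_of_add_eq_zero_left hc)
    have d3 := fact_ne_zero' j
    have d4 : ((j:ℂ)+1) ≠ 0 := Nat.cast_add_one_ne_zero j
    rw [Pc_succ, Nat.factorial_succ]
    push_cast
    field_simp
    ring
  rw [Filter.eventually_atTop]
  refine ⟨⌈‖b‖ + 2*‖z‖⌉₊ + 1, fun j hj => ?_⟩
  have hjR : (j:ℝ) ≥ ‖b‖ + 2*‖z‖ + 1 := by
    have h1 : (⌈‖b‖ + 2*‖z‖⌉₊ : ℝ) ≥ ‖b‖ + 2*‖z‖ := Nat.le_ceil _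
    have h2 : (j:ℝ) ≥ (⌈‖b‖ + 2*‖z‖⌉₊ : ℝ) + 1 := by exact_mod_cast hj
    linarith
  simp only [norm_norm]
  rw [key j, norm_mul]
  have hD : ‖b + (j:ℂ)‖ ≥ 2*‖z‖ + 1 := by
    have t1 : ‖(j:ℂ)‖ ≤ ‖b + (j:ℂ)‖ + ‖b‖ := by
      calc ‖(j:ℂ)‖ = ‖(b + (j:ℂ)) + (-b)‖ := by ring_nf
      _ ≤ ‖b + (j:ℂ)‖ + ‖(-b)‖ := norm_add_le _ _
      _ = ‖b + (j:ℂ)‖ + ‖b‖ := by rw [norm_neg]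
    rw [Complex.norm_natCast] at t1
    linarith
  have hb1 : ‖z / (b + (j:ℂ))‖ ≤ 1/2 := by
    rw [norm_div, div_le_iff₀ (by linarith [norm_nonneg z] : (0:ℝ) < ‖b + (j:ℂ)‖)]
    linarith [norm_nonneg z]
  have hb2 : ‖1/((j:ℂ)+1)‖ ≤ 1 := by
    rw [norm_div, norm_one, norm_natCast_add_one,
      div_le_one (by positivity : (0:ℝ) < (j:ℝ)+1)]
    linarith [Nat.cast_nonneg (α := ℝ) j]
  have hq : ‖(z / (b + (j:ℂ))) * (1/((j:ℂ)+1))‖ ≤ 1/2 := by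
    rw [norm_mul]
    calc ‖z / (b + (j:ℂ))‖ * ‖1/((j:ℂ)+1)‖ ≤ (1/2) * 1 :=
          mul_le_mul hb1 hb2 (norm_nonneg _) (by norm_num)
      _ = 1/2 := by norm_num
  calc ‖z ^ j / (Pc b j * ((j.factorial : ℕ) : ℂ))‖ * ‖(z / (b + (j:ℂ))) * (1/((j:ℂ)+1))‖
      ≤ ‖z ^ j / (Pc b j * ((j.factorial : ℕ) : ℂ))‖ * (1/2) :=
        mul_le_mul_of_nonneg_left hq (norm_nonneg _)
    _ = 1/2 * ‖z ^ j / (Pc b j * ((j.factorial : ℕ) : ℂ))‖ := by ring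

lemma summable_B (a w : ℂ) (h2a : ∀ k : ℕ, 2*a ≠ -(k:ℂ)) :
    Summable (fun n : ℕ => ‖Pc a n * w ^ n / (Pc (2*a) n * ((n.factorial : ℕ) : ℂ))‖) := by
  apply summable_of_ratio_norm_eventually_le (r := 1/2) (by norm_num)
  have hP := Pc_ne_zero h2a
  have key : ∀ n : ℕ, Pc a (n+1) * w ^ (n+1) / (Pc (2*a) (n+1) * (((n+1).factorial : ℕ) : ℂ))
      = (Pc a n * w ^ n / (Pc (2*a) n * ((n.factorial : ℕ) : ℂ)))
        * (((a + n) / (2*a + n)) * (w/((n:ℂ)+1))) := by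
    intro n
    have d1 := hP n
    have d2 : (2*a + (n:ℂ)) ≠ 0 := fun hc => h2a n (eq_neg_of_add_eq_zero_left hc)
    have d3 := fact_ne_zero' n
    have d4 : ((n:ℂ)+1) ≠ 0 := Nat.cast_add_one_ne_zero n
    rw [Pc_succ, Pc_succ, Nat.factorial_succ]
    push_cast
    field_simp
    ring
  rw [Filter.eventually_atTop]
  refine ⟨⌈‖a‖ + 2*‖2*a‖ + 4*‖w‖⌉₊ + 1, fun n hn => ?_⟩
  have hnR : (n:ℝ) ≥ ‖a‖ + 2*‖2*a‖ + 4*‖w‖ + 1 := by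
    have t1 : (⌈‖a‖ + 2*‖2*a‖ + 4*‖w‖⌉₊ : ℝ) ≥ ‖a‖ + 2*‖2*a‖ + 4*‖w‖ := Nat.le_ceil _
    have t2 : (n:ℝ) ≥ (⌈‖a‖ + 2*‖2*a‖ + 4*‖w‖⌉₊ : ℝ) + 1 := by exact_mod_cast hn
    linarith
  simp only [norm_norm]
  rw [key n, norm_mul]
  have hD : ‖2*a + (n:ℂ)‖ ≥ (n:ℝ) - ‖2*a‖ := by
    have t1 : ‖(n:ℂ)‖ ≤ ‖2*a + (n:ℂ)‖ + ‖2*a‖ := by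
      calc ‖(n:ℂ)‖ = ‖(2*a + (n:ℂ)) + (-(2*a))‖ := by ring_nf
      _ ≤ ‖2*a + (n:ℂ)‖ + ‖(-(2*a))‖ := norm_add_le _ _
      _ = ‖2*a + (n:ℂ)‖ + ‖2*a‖ := by rw [norm_neg]
    rw [Complex.norm_natCast] at t1
    linarith
  have hDpos : (0:ℝ) < ‖2*a + (n:ℂ)‖ := by
    have : (n:ℝ) - ‖2*a‖ ≥ ‖a‖ + ‖2*a‖ + 4*‖w‖ + 1 := by linarith
    nlinarith [norm_nonneg a, norm_nonneg w, norm_nonneg (2*a)]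
  have hb1 : ‖(a + (n:ℂ)) / (2*a + (n:ℂ))‖ ≤ 2 := by
    rw [norm_div, div_le_iff₀ hDpos]
    have t2 : ‖a + (n:ℂ)‖ ≤ ‖a‖ + (n:ℝ) := by
      calc ‖a + (n:ℂ)‖ ≤ ‖a‖ + ‖(n:ℂ)‖ := norm_add_le _ _
      _ = ‖a‖ + (n:ℝ) := by rw [Complex.norm_natCast]
    nlinarith [norm_nonneg a, norm_nonneg (2*a), norm_nonneg w]
  have hb2 : ‖w/((n:ℂ)+1)‖ ≤ 1/4 := by
    rw [norm_div, norm_natCast_add_one,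
      div_le_iff₀ (by positivity : (0:ℝ) < (n:ℝ)+1)]
    nlinarith [norm_nonneg a, norm_nonneg (2*a), norm_nonneg w]
  have hq : ‖((a + (n:ℂ)) / (2*a + (n:ℂ))) * (w/((n:ℂ)+1))‖ ≤ 1/2 := by
    rw [norm_mul]
    calc ‖(a + (n:ℂ)) / (2*a + (n:ℂ))‖ * ‖w/((n:ℂ)+1)‖ ≤ 2 * (1/4) :=
          mul_le_mul hb1 hb2 (norm_nonneg _) (by norm_num)
      _ = 1/2 := by norm_num
  calc ‖Pc a n * w ^ n / (Pc (2*a) n * ((n.factorial : ℕ) : ℂ))‖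
        * ‖((a + (n:ℂ)) / (2*a + (n:ℂ))) * (w/((n:ℂ)+1))‖
      ≤ ‖Pc a n * w ^ n / (Pc (2*a) n * ((n.factorial : ℕ) : ℂ))‖ * (1/2) :=
        mul_le_mul_of_nonneg_left hq (norm_nonneg _)
    _ = 1/2 * ‖Pc a n * w ^ n / (Pc (2*a) n * ((n.factorial : ℕ) : ℂ))‖ := by ring

lemma summable_E (x : ℂ) :
    Summable (fun m : ℕ => ‖x ^ m / ((m.factorial : ℕ) : ℂ)‖) := by
  refine (Real.summable_pow_div_factorial ‖x‖).congr fun m => ?_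
  rw [norm_div, norm_pow, Complex.norm_natCast]

lemma Pc_def (x : ℂ) (n : ℕ) : (ascPochhammer ℂ n).eval x = Pc x n := rfl

lemma cexp_tsum (x : ℂ) : Complex.exp x = ∑' n : ℕ, x ^ n / ((n.factorial : ℕ) : ℂ) := by
  rw [Complex.exp_eq_exp_ℂ, NormedSpace.exp_eq_tsum_div]

/-- Kummer's second transformation: if neither `α+1` nor `2α+1` is a
nonpositive integer and `z ∉ (−∞,0)`, then for either choice of sign `s = ±1`,
both series converge absolutely and
`∑_j z^j/((α+1)_j j!) = e^{-2s√z} ∑_n (α+1/2)_n (4s√z)^n/((2α+1)_n n!)`,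
where `(a)_n` is the Pochhammer symbol (`ascPochhammer`) and `√z` is principal. -/
theorem stmt_13 (α z : ℂ)
    (h1 : ∀ n : ℕ, α + 1 ≠ -(n : ℂ))
    (h2 : ∀ n : ℕ, 2 * α + 1 ≠ -(n : ℂ))
    (hz : ¬(z.im = 0 ∧ z.re < 0)) :
    ∀ s : ℂ, s = 1 ∨ s = -1 →
      Summable (fun j : ℕ =>
        ‖z ^ j / ((ascPochhammer ℂ j).eval (α + 1) * (j.factorial : ℂ))‖) ∧
      Summable (fun n : ℕ =>
        ‖(ascPochhammer ℂ n).eval (α + 1 / 2) * (s * 4 * z ^ ((1 : ℂ) / 2)) ^ n /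
          ((ascPochhammer ℂ n).eval (2 * α + 1) * (n.factorial : ℂ))‖) ∧
      (∑' j : ℕ, z ^ j / ((ascPochhammer ℂ j).eval (α + 1) * (j.factorial : ℂ)))
        = Complex.exp (-(s * 2 * z ^ ((1 : ℂ) / 2))) *
          ∑' n : ℕ,
            (ascPochhammer ℂ n).eval (α + 1 / 2) * (s * 4 * z ^ ((1 : ℂ) / 2)) ^ n /
              ((ascPochhammer ℂ n).eval (2 * α + 1) * (n.factorial : ℂ)) := by
  intro s hs
  simp only [Pc_def]
  rw [show (2*α+1 : ℂ) = 2*(α+1/2) by ring]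
  have h2a : ∀ k : ℕ, 2*(α+1/2) ≠ -(k:ℂ) := by
    intro k
    rw [show (2*(α+1/2) : ℂ) = 2*α+1 by ring]
    exact h2 k
  have haZ : ∀ k : ℕ, (α+1/2 : ℂ) ≠ -(k:ℂ) := by
    intro k hc
    apply h2 (2*k)
    push_cast
    linear_combination 2*hc
  refine ⟨summable_F (α+1) z h1, summable_B (α+1/2) _ h2a, ?_⟩
  set a : ℂ := α + 1/2 with ha
  set ζ : ℂ := z ^ ((1:ℂ)/2) with hζ
  rw [show -(s*2*ζ) = -(2*(s*ζ)) by ring]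
  have hsz : ∀ n : ℕ, (s*4*ζ)^n = (4*(s*ζ))^n := fun n => by rw [show s*4*ζ = 4*(s*ζ) by ring]
  simp only [hsz]
  set r : ℂ := s * ζ with hrdef
  have hs2 : s^2 = 1 := by rcases hs with h|h <;> rw [h] <;> ring
  have hzeta2 : ζ^2 = z := by
    by_cases hz0 : z = 0
    · rw [hζ, hz0, Complex.zero_cpow (by norm_num : (1:ℂ)/2 ≠ 0)]
      norm_num
    · rw [pow_two, hζ, ← Complex.cpow_add _ _ hz0]
      norm_num
  have hr2 : r^2 = z := by rw [hrdef, mul_pow, hs2, one_mul, hzeta2]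
  set E : ℕ → ℂ := fun m => (-(2*r)) ^ m / ((m.factorial : ℕ) : ℂ) with hE'
  set B : ℕ → ℂ := fun n => Pc a n * (4*r) ^ n / (Pc (2*a) n * ((n.factorial : ℕ) : ℂ)) with hB'
  set SC : ℕ → ℂ := fun N => ∑ k ∈ Finset.range (N+1), E k * B (N-k) with hSC'
  have hP2 := Pc_ne_zero h2a
  have hPa := Pc_ne_zero haZ
  have hPb := Pc_ne_zero h1
  have hSC : ∀ N, SC N * Pc (2*a) N = r^N * (2^N * fc a N) := by
    intro N
    have hterm : ∀ n ∈ Finset.range (N+1),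
        E (N-n) * B (N-(N-n)) * Pc (2*a) N
          = r^N * ((-2:ℂ)^(N-n) * 4^n * Ac a n * Ac (2*a + (n:ℂ)) (N-n)) := by
      intro n hn
      have hn' : n ≤ N := by have := Finset.mem_range.mp hn; omega
      rw [Nat.sub_sub_self hn']
      simp only [hE', hB', Ac]
      have hPA := Pc_add (2*a) n (N-n)
      rw [show n+(N-n) = N by omega] at hPA
      rw [hPA, show (-(2*r)) = (-2)*r by ring, mul_pow, mul_pow]
      have hrr : r^(N-n) * r^n = r^N := by rw [← pow_add]; congr 1; omega
      rw [← hrr]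
      have f1 := fact_ne_zero' n
      have f2 := fact_ne_zero' (N-n)
      have d1 := hP2 n
      field_simp
      ring
    calc SC N * Pc (2*a) N
        = ∑ k ∈ Finset.range (N+1), E k * B (N-k) * Pc (2*a) N := by
          rw [hSC', Finset.sum_mul]
      _ = ∑ n ∈ Finset.range (N+1), E (N+1-1-n) * B (N-(N+1-1-n)) * Pc (2*a) N :=
          (Finset.sum_range_reflect (fun k => E k * B (N-k) * Pc (2*a) N) (N+1)).symm
      _ = ∑ n ∈ Finset.range (N+1), E (N-n) * B (N-(N-n)) * Pc (2*a) N := by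
          simp only [Nat.add_sub_cancel]
      _ = ∑ n ∈ Finset.range (N+1),
            r^N * ((-2:ℂ)^(N-n) * 4^n * Ac a n * Ac (2*a + (n:ℂ)) (N-n)) :=
          Finset.sum_congr rfl hterm
      _ = r^N * ∑ n ∈ Finset.range (N+1),
            (-2:ℂ)^(N-n) * 4^n * Ac a n * Ac (2*a + (n:ℂ)) (N-n) :=
          (Finset.mul_sum _ _ _).symm
      _ = r^N * (2^N * fc a N) := by rw [main_fin]
  have hSCval : ∀ N, SC N = r^N * (2^N * fc a N) / Pc (2*a) N :=
    fun N => (eq_div_iff (hP2 N)).mpr (hSC N)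
  have heven : ∀ j : ℕ, SC (2*j) = z^j / (Pc (α+1) j * ((j.factorial : ℕ) : ℂ)) := by
    intro j
    rw [hSCval (2*j), (fc_even_odd a j).1, pow_mul r 2 j, hr2, pow_mul (2:ℂ) 2 j,
      Pc_dup a j, show a + 1/2 = α+1 by rw [ha]; ring,
      show ((2:ℂ)^2) = 4 by norm_num,
      show Ac a j = Pc a j / ((j.factorial : ℕ) : ℂ) from rfl]
    have f1 := fact_ne_zero' j
    have d1 := hPa j
    have d2 := hPb j
    have d4 : (4:ℂ)^j ≠ 0 := pow_ne_zero _ (by norm_num)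
    field_simp
  have hodd : ∀ j : ℕ, SC (2*j+1) = 0 := by
    intro j
    rw [hSCval (2*j+1), (fc_even_odd a j).2]
    simp
  have hinj : Function.Injective (fun j : ℕ => 2*j) := fun x y h => by
    dsimp at h; omega
  have hsupp : Function.support SC ⊆ Set.range (fun j : ℕ => 2*j) := by
    intro N hN
    rcases Nat.even_or_odd N with ⟨j, hj⟩ | ⟨j, hj⟩
    · exact ⟨j, by dsimp; omega⟩
    · exact absurd (by rw [show N = 2*j+1 by omega]; exact hodd j) hN
  have hEsum : Summable (fun m => ‖E m‖) := summable_E (-(2*r))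
  have hBsum : Summable (fun n => ‖B n‖) := summable_B a (4*r) h2a
  calc (∑' j : ℕ, z ^ j / (Pc (α+1) j * ((j.factorial : ℕ) : ℂ)))
      = ∑' j : ℕ, SC (2*j) := (tsum_congr heven).symm
    _ = ∑' N : ℕ, SC N := hinj.tsum_eq hsupp
    _ = (∑' m, E m) * (∑' n, B n) :=
        (tsum_mul_tsum_eq_tsum_sum_range_of_summable_norm hEsum hBsum).symm
    _ = Complex.exp (-(2*r)) * ∑' n, B n := by rw [cexp_tsum]
end
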